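/- arXiv:2205.08631 — 7 statements merged into one kernel-verified Lean document; each statement's English description precedes it below -/
import Mathlib

section
/- Let r ≥ 1, let ζ ∈ ℂ be a primitive r-th root of unity (ζ^r = 1 and ζ^k ≠ 1 for 1 ≤ k < r), and let A and B be invertible r × r complex matrices satisfying A·B = ζ·(B·A). Then for every eigenvalue μ of B: (i) the eigenvalues of B are exactly the r pairwise-distinct numbers μ, ζμ, ζ²μ, …, ζ^{r−1}μ, and (ii) for each eigenvalue λ of B the eigenspace ker(B − λ·1) has complex dimension exactly 1. -/
open Matrix

lemma sum_finrank_eq_finrank_sup {K V : Type*} [Field K] [AddCommGroup V] [Module K V]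
    [FiniteDimensional K V] {ι : Type*} [DecidableEq ι] (p : ι → Submodule K V)
    (h : iSupIndep p) (s : Finset ι) :
    ∑ i ∈ s, Module.finrank K (p i) = Module.finrank K (s.sup p : Submodule K V) := by
  induction s using Finset.induction_on with
  | empty => rw [Finset.sum_empty, Finset.sup_empty, finrank_bot]
  | @insert a s ha ih =>
    have hd : Disjoint (p a) (s.sup p) := by
      refine (h a).mono_right (Finset.sup_le fun i hi => ?_)
      exact le_iSup₂ (f := fun j (_ : j ≠ a) => p j) i (fun hia => ha (hia ▸ hi))
    have key := Submodule.finrank_sup_add_finrank_inf_eq (p a) (s.sup p)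
    rw [hd.eq_bot] at key
    simp only [finrank_bot, add_zero] at key
    rw [Finset.sum_insert ha, ih, Finset.sup_insert, key]

/-- Let `ζ` be a primitive `r`-th root of unity and `A`, `B` invertible
`r × r` complex matrices with `A·B = ζ·(B·A)`.  Then for every eigenvalue `μ` of `B`:
(i) the eigenvalues of `B` are exactly the `r` pairwise-distinct numbers
`μ, ζμ, …, ζ^{r-1}μ`, and (ii) every eigenspace of `B` has complex dimension exactly `1`. -/
theorem stmt_2 (r : ℕ) (hr : 1 ≤ r) (ζ : ℂ) (hζr : ζ ^ r = 1)
    (hζprim : ∀ k : ℕ, 1 ≤ k → k < r → ζ ^ k ≠ 1)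
    (A B : Matrix (Fin r) (Fin r) ℂ) (hA : IsUnit A) (hB : IsUnit B)
    (hcomm : A * B = ζ • (B * A))
    (μ : ℂ) (hμ : ∃ v : Fin r → ℂ, v ≠ 0 ∧ B.mulVec v = μ • v) :
    (∀ lam : ℂ, (∃ v : Fin r → ℂ, v ≠ 0 ∧ B.mulVec v = lam • v) ↔
      ∃ k : Fin r, lam = ζ ^ (k : ℕ) * μ) ∧
    Function.Injective (fun k : Fin r => ζ ^ (k : ℕ) * μ) ∧
    (∀ lam : ℂ, (∃ v : Fin r → ℂ, v ≠ 0 ∧ B.mulVec v = lam • v) →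
      Module.finrank ℂ
        (LinearMap.ker (B.mulVecLin - lam • (LinearMap.id : (Fin r → ℂ) →ₗ[ℂ] Fin r → ℂ))) = 1) := by
  have hζ0 : ζ ≠ 0 := by
    intro h
    rw [h, zero_pow (by omega)] at hζr
    exact zero_ne_one hζr
  have hAd : IsUnit A.det := (Matrix.isUnit_iff_isUnit_det A).mp hA
  have hBd : IsUnit B.det := (Matrix.isUnit_iff_isUnit_det B).mp hB
  have hAiA : A⁻¹ * A = 1 := Matrix.nonsing_inv_mul A hAd
  have hAAi : A * A⁻¹ = 1 := Matrix.mul_nonsing_inv A hAd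
  have hBiB : B⁻¹ * B = 1 := Matrix.nonsing_inv_mul B hBd
  have hμ0 : μ ≠ 0 := by
    obtain ⟨v, hv0, hv⟩ := hμ
    intro h
    rw [h, zero_smul] at hv
    apply hv0
    have h2 : B⁻¹.mulVec (B.mulVec v) = 0 := by rw [hv, Matrix.mulVec_zero]
    rwa [Matrix.mulVec_mulVec, hBiB, Matrix.one_mulVec] at h2
  have key : B * A⁻¹ = ζ • (A⁻¹ * B) := by
    calc B * A⁻¹ = A⁻¹ * (A * B) * A⁻¹ := by rw [← Matrix.mul_assoc, hAiA, Matrix.one_mul]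
      _ = A⁻¹ * (ζ • (B * A)) * A⁻¹ := by rw [hcomm]
      _ = ζ • (A⁻¹ * B * (A * A⁻¹)) := by
          rw [Matrix.mul_smul, Matrix.smul_mul]
          simp only [Matrix.mul_assoc]
      _ = ζ • (A⁻¹ * B) := by rw [hAAi, Matrix.mul_one]
  have step : ∀ lam : ℂ, (∃ v : Fin r → ℂ, v ≠ 0 ∧ B.mulVec v = lam • v) →
      (∃ v : Fin r → ℂ, v ≠ 0 ∧ B.mulVec v = (ζ * lam) • v) := by
    rintro lam ⟨v, hv0, hv⟩
    refine ⟨A⁻¹.mulVec v, ?_, ?_⟩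
    · intro h0
      apply hv0
      have h2 := congrArg A.mulVec h0
      rwa [Matrix.mulVec_mulVec, hAAi, Matrix.one_mulVec, Matrix.mulVec_zero] at h2
    · rw [Matrix.mulVec_mulVec, key, Matrix.smul_mulVec, ← Matrix.mulVec_mulVec, hv,
        Matrix.mulVec_smul, smul_smul]
  have hexists : ∀ k : ℕ, ∃ v : Fin r → ℂ, v ≠ 0 ∧ B.mulVec v = (ζ ^ k * μ) • v := by
    intro k
    induction k with
    | zero => simpa using hμ
    | succ n ih =>
      have h2 := step _ ih
      rwa [← mul_assoc, ← pow_succ'] at h2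
  have injaux : ∀ i j : ℕ, i < r → j < r → i ≤ j → ζ ^ i * μ = ζ ^ j * μ → i = j := by
    intro i j hi hj hij h
    have h1 : ζ ^ i = ζ ^ j := mul_right_cancel₀ hμ0 h
    have h2 : ζ ^ i * ζ ^ (j - i) = ζ ^ i * 1 := by
      rw [mul_one, ← pow_add]
      rw [show i + (j - i) = j from by omega]
      exact h1.symm
    have h3 : ζ ^ (j - i) = 1 := mul_left_cancel₀ (pow_ne_zero i hζ0) h2
    by_contra hne
    have e1 : 1 ≤ j - i := by omega
    have e2 : j - i < r := by omega
    exact hζprim (j - i) e1 e2 h3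
  have hinj : Function.Injective (fun k : Fin r => ζ ^ (k : ℕ) * μ) := by
    intro i j h
    simp only at h
    rcases le_total (i : ℕ) (j : ℕ) with hij | hij
    · exact Fin.ext (injaux i j i.isLt j.isLt hij h)
    · exact (Fin.ext (injaux j i j.isLt i.isLt hij h.symm)).symm
  set f : Module.End ℂ (Fin r → ℂ) := B.mulVecLin with hf
  have hmem : ∀ (lam : ℂ) (x : Fin r → ℂ), x ∈ f.eigenspace lam ↔ B.mulVec x = lam • x := by
    intro lam x
    rw [Module.End.mem_eigenspace_iff]
    rfl
  have hne : ∀ lam : ℂ, (∃ v : Fin r → ℂ, v ≠ 0 ∧ B.mulVec v = lam • v) ↔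
      f.eigenspace lam ≠ ⊥ := by
    intro lam
    rw [Submodule.ne_bot_iff]
    constructor
    · rintro ⟨v, hv0, hv⟩
      exact ⟨v, (hmem lam v).mpr hv, hv0⟩
    · rintro ⟨v, hv, hv0⟩
      exact ⟨v, hv0, (hmem lam v).mp hv⟩
  have part1 : ∀ lam : ℂ, (∃ v : Fin r → ℂ, v ≠ 0 ∧ B.mulVec v = lam • v) →
      ∃ k : Fin r, lam = ζ ^ (k : ℕ) * μ := by
    intro lam hlam
    by_contra hnot
    push_neg at hnot
    set vals : Option (Fin r) → ℂ := fun o => o.elim lam (fun k => ζ ^ (k : ℕ) * μ) with hvals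
    have hvinj : Function.Injective vals := by
      rintro (_ | i) (_ | j) h
      · rfl
      · exact absurd h (hnot j)
      · exact absurd h.symm (hnot i)
      · exact congrArg _ (hinj h)
    have hv : ∀ o : Option (Fin r), ∃ v : Fin r → ℂ, v ≠ 0 ∧ B.mulVec v = vals o • v := by
      rintro (_ | k)
      · exact hlam
      · exact hexists k
    choose w hw0 hw using hv
    have hli : LinearIndependent ℂ w :=
      Module.End.eigenvectors_linearIndependent' f vals hvinj w
        (fun o => ⟨(hmem _ _).mpr (hw o), hw0 o⟩)
    have hcard := hli.fintype_card_le_finrank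
    rw [Module.finrank_fin_fun] at hcard
    simp only [Fintype.card_option, Fintype.card_fin] at hcard
    omega
  have part3 : ∀ k : Fin r, Module.finrank ℂ (f.eigenspace (ζ ^ (k : ℕ) * μ)) = 1 := by
    intro k
    set p : Fin r → Submodule ℂ (Fin r → ℂ) := fun k => f.eigenspace (ζ ^ (k : ℕ) * μ) with hp
    have hpind : iSupIndep p := (Module.End.eigenspaces_iSupIndep f).comp hinj
    have hsum := sum_finrank_eq_finrank_sup p hpind Finset.univ
    have hle : Module.finrank ℂ (Finset.univ.sup p : Submodule ℂ (Fin r → ℂ)) ≤ r := by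
      have h2 := Submodule.finrank_le (Finset.univ.sup p)
      rwa [Module.finrank_fin_fun] at h2
    have hpos : ∀ k : Fin r, 1 ≤ Module.finrank ℂ (p k) := by
      intro k
      have hnb : p k ≠ ⊥ := (hne _).mp (hexists k)
      have h2 := (Submodule.finrank_eq_zero (S := p k)).not.mpr hnb
      omega
    have h1 : ∀ k ∈ Finset.univ, (1 : ℕ) ≤ Module.finrank ℂ (p k) := fun k _ => hpos k
    have heq : ∑ k : Fin r, Module.finrank ℂ (p k) = ∑ _k : Fin r, 1 := by
      have hge : ∑ _k : Fin r, 1 ≤ ∑ k : Fin r, Module.finrank ℂ (p k) :=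
        Finset.sum_le_sum h1
      have hle2 : ∑ k : Fin r, Module.finrank ℂ (p k) ≤ ∑ _k : Fin r, (1 : ℕ) := by
        rw [hsum]
        simpa using hle
      omega
    exact (Finset.sum_eq_sum_iff_of_le h1).mp heq.symm k (Finset.mem_univ k) |>.symm
  refine ⟨fun lam => ⟨part1 lam, ?_⟩, hinj, ?_⟩
  · rintro ⟨k, rfl⟩
    exact hexists k
  · intro lam hlam
    obtain ⟨k, rfl⟩ := part1 lam hlam
    have hker : LinearMap.ker (B.mulVecLin - (ζ ^ (k : ℕ) * μ) •
        (LinearMap.id : (Fin r → ℂ) →ₗ[ℂ] Fin r → ℂ)) = f.eigenspace (ζ ^ (k : ℕ) * μ) := by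
      ext x
      rw [LinearMap.mem_ker, hmem]
      simp [sub_eq_zero, Matrix.mulVecLin_apply]
    rw [hker]
    exact part3 k
end

section
/- Let r ≥ 1, let ζ ∈ ℂ be a primitive r-th root of unity (ζ^r = 1 and ζ^k ≠ 1 for 1 ≤ k < r), and let A and B be invertible r × r complex matrices satisfying A·B = ζ·(B·A). Then any r × r complex matrix M that commutes with both A and B (M·A = A·M and M·B = B·M) is a scalar multiple of the identity: M = c·1 for some c ∈ ℂ. -/
open Matrix

/-- Let `ζ` be a primitive `r`-th root of unity and `A`, `B` invertible
`r × r` complex matrices with `A·B = ζ·(B·A)`.  Then any matrix `M` commuting with both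
`A` and `B` is a scalar multiple of the identity. -/
theorem stmt_3 (r : ℕ) (hr : 1 ≤ r) (ζ : ℂ) (hζr : ζ ^ r = 1)
    (hζprim : ∀ k : ℕ, 1 ≤ k → k < r → ζ ^ k ≠ 1)
    (A B : Matrix (Fin r) (Fin r) ℂ) (hA : IsUnit A) (hB : IsUnit B)
    (hcomm : A * B = ζ • (B * A))
    (M : Matrix (Fin r) (Fin r) ℂ) (hMA : M * A = A * M) (hMB : M * B = B * M) :
    ∃ c : ℂ, M = c • (1 : Matrix (Fin r) (Fin r) ℂ) := by
  have hr0 : 0 < r := hr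
  haveI : NeZero r := ⟨Nat.one_le_iff_ne_zero.mp hr⟩
  haveI : Nontrivial (Fin r → ℂ) := by
    have : Nonempty (Fin r) := ⟨⟨0, hr0⟩⟩
    infer_instance
  have hAinj : Function.Injective A.mulVec := mulVec_injective_iff_isUnit.2 hA
  set f : Module.End ℂ (Fin r → ℂ) := Matrix.mulVecLin A with hf
  obtain ⟨lam, hlam⟩ := Module.End.exists_eigenvalue f
  obtain ⟨v, hv⟩ := hlam.exists_hasEigenvector
  have hvA : A.mulVec v = lam • v := hv.apply_eq_smul
  have hv0 : v ≠ 0 := hv.right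
  have hζ0 : ζ ≠ 0 := by
    intro h; rw [h, zero_pow hr0.ne'] at hζr; exact zero_ne_one hζr
  have hlam0 : lam ≠ 0 := by
    intro h
    apply hv0
    apply hAinj
    rw [hvA, h, zero_smul, Matrix.mulVec_zero]
  -- power commutation
  have hpow : ∀ k : ℕ, A * B ^ k = (ζ ^ k) • (B ^ k * A) := by
    intro k
    induction k with
    | zero => simp
    | succ n ih =>
      calc A * B ^ (n + 1) = (A * B ^ n) * B := by rw [pow_succ, mul_assoc]
        _ = (ζ ^ n) • (B ^ n * A * B) := by rw [ih, smul_mul_assoc]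
        _ = (ζ ^ n) • (B ^ n * (ζ • (B * A))) := by rw [mul_assoc, hcomm]
        _ = (ζ ^ (n + 1)) • (B ^ (n + 1) * A) := by
            rw [Matrix.mul_smul, smul_smul, pow_succ ζ, pow_succ B, mul_assoc]
  -- eigenvectors
  set w : Fin r → (Fin r → ℂ) := fun k => (B ^ (k : ℕ)).mulVec v with hw
  set μ : Fin r → ℂ := fun k => ζ ^ (k : ℕ) * lam with hμ
  have hweig : ∀ k : Fin r, f (w k) = μ k • w k := by
    intro k
    show A.mulVec ((B ^ (k : ℕ)).mulVec v) = _
    rw [Matrix.mulVec_mulVec, hpow, Matrix.smul_mulVec, ← Matrix.mulVec_mulVec,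
      hvA, Matrix.mulVec_smul, hμ, hw, smul_smul]
  have hwne : ∀ k : Fin r, w k ≠ 0 := by
    intro k h
    have hBk : Function.Injective (B ^ (k : ℕ)).mulVec :=
      mulVec_injective_iff_isUnit.2 (hB.pow _)
    apply hv0
    apply hBk
    rw [Matrix.mulVec_zero]
    exact h
  have hμinj : Function.Injective μ := by
    intro j k hjk
    have hζjk : ζ ^ (j : ℕ) = ζ ^ (k : ℕ) := by
      simp only [hμ] at hjk; replace hjk := mul_right_cancel₀ hlam0 hjk
      exact hjk
    by_contra hne
    -- wlog j < k
    have key : ∀ a b : Fin r, (a : ℕ) < (b : ℕ) → ζ ^ (a : ℕ) = ζ ^ (b : ℕ) → False := by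
      intro a b hab heq
      have : ζ ^ ((b : ℕ) - (a : ℕ)) = 1 := by
        have := pow_sub₀ ζ hζ0 hab.le
        rw [this, ← heq]
        field_simp [pow_ne_zero _ hζ0]
      exact hζprim _ (Nat.sub_pos_of_lt hab) (lt_of_le_of_lt (Nat.sub_le _ _) b.isLt) this
    rcases lt_or_gt_of_ne (fun h : (j : ℕ) = (k : ℕ) => hne (Fin.ext h)) with h | h
    · exact key j k h hζjk
    · exact key k j h hζjk.symm
  have hli : LinearIndependent ℂ w :=
    f.eigenvectors_linearIndependent' μ hμinj w fun k =>
      ⟨Module.End.mem_eigenspace_iff.2 (hweig k), hwne k⟩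
  have hcard : Fintype.card (Fin r) = Module.finrank ℂ (Fin r → ℂ) := by simp
  set b : Module.Basis (Fin r) ℂ (Fin r → ℂ) := basisOfLinearIndependentOfCardEqFinrank hli hcard
    with hb
  have hbk : ∀ k, b k = w k := fun k => by
    rw [hb, coe_basisOfLinearIndependentOfCardEqFinrank]
  -- M v is eigenvector of f with eigenvalue lam
  set u : Fin r → ℂ := M.mulVec v with hu
  have hfu : f u = lam • u := by
    show A.mulVec (M.mulVec v) = _
    rw [Matrix.mulVec_mulVec, ← hMA, ← Matrix.mulVec_mulVec, hvA, Matrix.mulVec_smul]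
  set c : Fin r → ℂ := fun k => b.repr u k with hc
  have hcoef : ∀ k : Fin r, c k * μ k = lam * c k := by
    intro k
    have h1 : f u = ∑ i, (c i * μ i) • b i := by
      conv_lhs => rw [← b.sum_repr u]
      rw [map_sum]
      refine Finset.sum_congr rfl fun i _ => ?_
      rw [hbk, f.map_smul, hweig i, smul_smul]
    have h2 : f u = ∑ i, (lam * c i) • b i := by
      rw [hfu]
      conv_lhs => rw [← b.sum_repr u]
      rw [Finset.smul_sum]
      refine Finset.sum_congr rfl fun i _ => ?_
      rw [smul_smul]
    have h3 : (fun i => c i * μ i) = fun i => lam * c i := by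
      have e1 := b.repr_sum_self (fun i => c i * μ i)
      have e2 := b.repr_sum_self (fun i => lam * c i)
      rw [← h1] at e1
      rw [← h2] at e2
      rw [← e1, ← e2]
    exact congrFun h3 k
  have hck : ∀ k : Fin r, k ≠ 0 → c k = 0 := by
    intro k hk
    have h := hcoef k
    rw [hμ] at h
    have h2 : c k * lam * (ζ ^ (k : ℕ) - 1) = 0 := by
      simp only at h; linear_combination h
    rcases mul_eq_zero.mp h2 with h' | h'
    · rcases mul_eq_zero.mp h' with h'' | h''
      · exact h''
      · exact absurd h'' hlam0
    · exact absurd (sub_eq_zero.mp h')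
        (hζprim (k : ℕ) (Nat.pos_of_ne_zero (fun h0 => hk (Fin.ext h0))) k.isLt)
  -- u = c 0 • v
  have hb0 : b 0 = v := by rw [hbk]; show (B ^ ((0 : Fin r) : ℕ)).mulVec v = v; simp
  have hu0 : u = c 0 • v := by
    conv_lhs => rw [← b.sum_repr u]
    rw [Finset.sum_eq_single 0]
    · rw [hb0]
    · intro i _ hi
      rw [show b.repr u i = c i from rfl, hck i hi, zero_smul]
    · intro h; exact absurd (Finset.mem_univ 0) h
  refine ⟨c 0, ?_⟩
  -- show equality via action on basis
  have hMw : ∀ k : Fin r, M.mulVec (w k) = c 0 • w k := by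
    intro k
    have hcom : M * B ^ (k : ℕ) = B ^ (k : ℕ) * M :=
      (Commute.pow_right (hMB) (k : ℕ))
    rw [hw]
    show M.mulVec ((B ^ (k : ℕ)).mulVec v) = _
    rw [Matrix.mulVec_mulVec, hcom, ← Matrix.mulVec_mulVec, ← hu, hu0,
      Matrix.mulVec_smul]
  have heq : Matrix.toLin' M = Matrix.toLin' ((c 0) • (1 : Matrix (Fin r) (Fin r) ℂ)) := by
    apply b.ext
    intro k
    rw [Matrix.toLin'_apply, Matrix.toLin'_apply, hbk]
    rw [hMw, Matrix.smul_mulVec, Matrix.one_mulVec]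
  exact Matrix.toLin'.injective heq
end

section
/- Let r ≥ 1, let ζ ∈ ℂ be a primitive r-th root of unity (ζ^r = 1 and ζ^k ≠ 1 for 1 ≤ k < r), and let A and B be invertible r × r complex matrices satisfying A·B = ζ·(B·A). Then the pair (A, B) acts irreducibly on ℂ^r: every complex linear subspace W ⊆ ℂ^r with A·W ⊆ W and B·W ⊆ W is either the zero subspace or all of ℂ^r. -/
open Matrix

/-- Let `ζ` be a primitive `r`-th root of unity and `A`, `B` invertible
`r × r` complex matrices with `A·B = ζ·(B·A)`.  Then the pair `(A, B)` acts irreducibly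
on `ℂ^r`: any subspace invariant under both is `⊥` or `⊤`. -/
theorem stmt_4 (r : ℕ) (hr : 1 ≤ r) (ζ : ℂ) (hζr : ζ ^ r = 1)
    (hζprim : ∀ k : ℕ, 1 ≤ k → k < r → ζ ^ k ≠ 1)
    (A B : Matrix (Fin r) (Fin r) ℂ) (hA : IsUnit A) (hB : IsUnit B)
    (hcomm : A * B = ζ • (B * A)) :
    ∀ W : Submodule ℂ (Fin r → ℂ),
      (∀ w ∈ W, A.mulVec w ∈ W) → (∀ w ∈ W, B.mulVec w ∈ W) → W = ⊥ ∨ W = ⊤ := by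
  intro W hAW hBW
  by_cases hbot : W = ⊥
  · exact Or.inl hbot
  right
  -- injectivity of A and B actions
  have hAinj : Function.Injective A.mulVec := mulVec_injective_iff_isUnit.mpr hA
  have hBinj : Function.Injective B.mulVec := mulVec_injective_iff_isUnit.mpr hB
  have hζne : ζ ≠ 0 := by
    intro h
    rw [h, zero_pow (by omega)] at hζr
    exact zero_ne_one hζr
  -- the endomorphism f given by A
  set f : Module.End ℂ (Fin r → ℂ) := A.mulVecLin with hf
  have hfW : ∀ x ∈ W, f x ∈ W := by
    intro x hx; simpa [hf, Matrix.mulVecLin_apply] using hAW x hx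
  haveI : Nontrivial W := Submodule.nontrivial_iff_ne_bot.mpr hbot
  obtain ⟨μ, hμ⟩ := Module.End.exists_eigenvalue (f.restrict hfW)
  obtain ⟨w0, hw0⟩ := hμ.exists_hasEigenvector
  have hw0mem : (w0 : Fin r → ℂ) ∈ W := w0.2
  have hw0ne : (w0 : Fin r → ℂ) ≠ 0 := by
    intro h
    exact hw0.right (Subtype.ext h)
  have hw0eig : A.mulVec (w0 : Fin r → ℂ) = μ • (w0 : Fin r → ℂ) := by
    have := hw0.apply_eq_smul
    have := congrArg (Subtype.val) this
    simpa [hf, Matrix.mulVecLin_apply, LinearMap.restrict_apply] using this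
  have hμne : μ ≠ 0 := by
    intro h
    apply hw0ne
    have : A.mulVec (w0 : Fin r → ℂ) = A.mulVec 0 := by
      rw [hw0eig, h, zero_smul, Matrix.mulVec_zero]
    exact hAinj this
  -- key commutation: B moves eigenvectors of A
  have key : ∀ (x : Fin r → ℂ) (ν : ℂ), A.mulVec x = ν • x →
      A.mulVec (B.mulVec x) = (ζ * ν) • B.mulVec x := by
    intro x ν hx
    calc A.mulVec (B.mulVec x) = (A * B).mulVec x := (Matrix.mulVec_mulVec _ _ _)
      _ = (ζ • (B * A)).mulVec x := by rw [hcomm]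
      _ = ζ • (B * A).mulVec x := Matrix.smul_mulVec _ _ _
      _ = ζ • B.mulVec (A.mulVec x) := by rw [Matrix.mulVec_mulVec]
      _ = ζ • B.mulVec (ν • x) := by rw [hx]
      _ = ζ • ν • B.mulVec x := by rw [Matrix.mulVec_smul]
      _ = (ζ * ν) • B.mulVec x := (smul_smul _ _ _)
  -- the family of vectors B^j • w0
  set v : ℕ → (Fin r → ℂ) := fun j => (B ^ j).mulVec (w0 : Fin r → ℂ) with hv
  have hv0 : v 0 = (w0 : Fin r → ℂ) := by simp [hv]
  have hvsucc : ∀ j, v (j + 1) = B.mulVec (v j) := by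
    intro j
    simp [hv, pow_succ', Matrix.mulVec_mulVec]
  have hvmem : ∀ j, v j ∈ W := by
    intro j
    induction j with
    | zero => rw [hv0]; exact hw0mem
    | succ n ih => rw [hvsucc]; exact hBW _ ih
  have hvne : ∀ j, v j ≠ 0 := by
    intro j
    induction j with
    | zero => rw [hv0]; exact hw0ne
    | succ n ih =>
      rw [hvsucc]
      intro h
      apply ih
      apply hBinj
      rw [h, Matrix.mulVec_zero]
  have hveig : ∀ j, A.mulVec (v j) = (ζ ^ j * μ) • v j := by
    intro j
    induction j with
    | zero => simpa [hv0] using hw0eig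
    | succ n ih =>
      rw [hvsucc]
      have := key (v n) (ζ ^ n * μ) ih
      rw [this, ← mul_assoc, ← pow_succ']
  -- eigenvalues are distinct
  have hinjμ : Function.Injective (fun j : Fin r => ζ ^ (j : ℕ) * μ) := by
    intro i j hij
    simp only at hij
    have hζij : ζ ^ (i : ℕ) = ζ ^ (j : ℕ) := by
      field_simp at hij
      tauto
    -- wlog i ≤ j
    rcases le_total (i : ℕ) (j : ℕ) with h | h
    · by_contra hne
      have hlt : (i : ℕ) < (j : ℕ) := lt_of_le_of_ne h (by
        intro hh; exact hne (Fin.ext hh))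
      have : ζ ^ ((j : ℕ) - (i : ℕ)) = 1 := by
        have hpow : ζ ^ (i : ℕ) * ζ ^ ((j : ℕ) - (i : ℕ)) = ζ ^ (j : ℕ) := by
          rw [← pow_add]; congr 1; omega
        rw [hζij] at hpow
        exact mul_left_cancel₀ (pow_ne_zero _ hζne) (hpow.trans (mul_one _).symm)
      exact hζprim _ (by omega) (by omega) this
    · by_contra hne
      have hlt : (j : ℕ) < (i : ℕ) := lt_of_le_of_ne h (by
        intro hh; exact hne (Fin.ext hh.symm))
      have : ζ ^ ((i : ℕ) - (j : ℕ)) = 1 := by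
        have hpow : ζ ^ (j : ℕ) * ζ ^ ((i : ℕ) - (j : ℕ)) = ζ ^ (i : ℕ) := by
          rw [← pow_add]; congr 1; omega
        rw [← hζij] at hpow
        exact mul_left_cancel₀ (pow_ne_zero _ hζne) (hpow.trans (mul_one _).symm)
      exact hζprim _ (by omega) (by omega) this
  -- linear independence of the eigenvectors
  have hli : LinearIndependent ℂ (fun j : Fin r => v (j : ℕ)) := by
    apply Module.End.eigenvectors_linearIndependent' f
      (fun j : Fin r => ζ ^ (j : ℕ) * μ) hinjμ
    intro j
    constructor
    · rw [Module.End.mem_eigenspace_iff]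
      simpa [hf, Matrix.mulVecLin_apply] using hveig (j : ℕ)
    · exact hvne _
  -- the family lands in W, so finrank W ≥ r
  set u : Fin r → W := fun j => ⟨v (j : ℕ), hvmem _⟩ with hu
  have hliu : LinearIndependent ℂ u := by
    apply LinearIndependent.of_comp (W.subtype)
    exact hli
  have hcard : r ≤ Module.finrank ℂ W := by
    simpa using hliu.fintype_card_le_finrank
  have hle : Module.finrank ℂ W ≤ r := by
    have := Submodule.finrank_le W
    simpa using this
  exact Submodule.eq_top_of_finrank_eq (by
    have : Module.finrank ℂ W = r := le_antisymm hle hcard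
    simpa using this)
end

section
/- Let r ≥ 1, let ζ ∈ ℂ be a primitive r-th root of unity (ζ^r = 1 and ζ^k ≠ 1 for 1 ≤ k < r), and let A and B be invertible r × r complex matrices satisfying A·B = ζ·(B·A). Then the r-th powers of A and B are scalar matrices: there exist a, b ∈ ℂ with A^r = a·1 and B^r = b·1. -/
open Matrix Polynomial

lemma eval_charpoly' {r : ℕ} (M : Matrix (Fin r) (Fin r) ℂ) (x : ℂ) :
    M.charpoly.eval x = (x • (1 : Matrix (Fin r) (Fin r) ℂ) - M).det := by
  rw [Matrix.charpoly, ← Polynomial.coe_evalRingHom, RingHom.map_det]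
  congr 1
  ext i j
  by_cases h : i = j <;>
    simp [charmatrix_apply, h, Matrix.one_apply, Matrix.diagonal_apply]

lemma coeff_comp_C_mul_X (p : Polynomial ℂ) (c : ℂ) (k : ℕ) :
    (p.comp (C c * X)).coeff k = c ^ k * p.coeff k := by
  induction p using Polynomial.induction_on' with
  | add p q hp hq => simp [add_comp, hp, hq, mul_add]
  | monomial n a =>
      simp only [monomial_comp, mul_pow, ← C_pow, ← mul_assoc, ← C_mul, coeff_C_mul,
        coeff_X_pow, coeff_monomial]
      by_cases h : k = n
      · simp [h, mul_comm]
      · simp [if_neg h, if_neg (show ¬n = k by omega)]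

lemma aux_scalar {r : ℕ} (hr : 1 ≤ r) {ζ : ℂ} (hζr : ζ ^ r = 1)
    (hζprim : ∀ k : ℕ, 1 ≤ k → k < r → ζ ^ k ≠ 1)
    (M N : Matrix (Fin r) (Fin r) ℂ) (hN : IsUnit N)
    (h : N⁻¹ * M * N = ζ • M) :
    ∃ a : ℂ, M ^ r = a • (1 : Matrix (Fin r) (Fin r) ℂ) := by
  have hNdet : IsUnit N.det := (Matrix.isUnit_iff_isUnit_det N).mp hN
  set p := M.charpoly with hp
  -- key functional equation
  have key : ∀ x : ℂ, p.eval (ζ * x) = p.eval x := by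
    intro x
    have h1 : (ζ * x) • (1 : Matrix (Fin r) (Fin r) ℂ) - ζ • M
        = ζ • (x • (1 : Matrix (Fin r) (Fin r) ℂ) - M) := by
      rw [smul_sub, smul_smul]
    have h2 : N⁻¹ * ((ζ * x) • (1 : Matrix (Fin r) (Fin r) ℂ) - M) * N
        = (ζ * x) • (1 : Matrix (Fin r) (Fin r) ℂ) - ζ • M := by
      rw [Matrix.mul_sub, Matrix.sub_mul, Matrix.mul_smul, Matrix.smul_mul, Matrix.mul_one,
        Matrix.nonsing_inv_mul N hNdet, h]
    calc p.eval (ζ * x) = ((ζ * x) • (1 : Matrix (Fin r) (Fin r) ℂ) - M).det :=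
          eval_charpoly' M _
      _ = (N⁻¹ * ((ζ * x) • (1 : Matrix (Fin r) (Fin r) ℂ) - M) * N).det := by
          rw [Matrix.det_mul, Matrix.det_mul, Matrix.det_nonsing_inv]
          rw [mul_comm (Ring.inverse N.det), mul_assoc, Ring.inverse_mul_cancel _ hNdet, mul_one]
      _ = ((ζ * x) • (1 : Matrix (Fin r) (Fin r) ℂ) - ζ • M).det := by rw [h2]
      _ = (ζ • (x • (1 : Matrix (Fin r) (Fin r) ℂ) - M)).det := by rw [h1]
      _ = ζ ^ r * (x • (1 : Matrix (Fin r) (Fin r) ℂ) - M).det := by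
          rw [Matrix.det_smul]; simp
      _ = p.eval x := by rw [hζr, one_mul, eval_charpoly' M]
  have hcomp : p.comp (C ζ * X) = p := by
    apply Polynomial.funext
    intro x
    rw [eval_comp]
    simpa using key x
  have hcoeff : ∀ k : ℕ, 1 ≤ k → k < r → p.coeff k = 0 := by
    intro k hk1 hkr
    have := congrArg (fun q => q.coeff k) hcomp
    simp only [coeff_comp_C_mul_X] at this
    by_contra hne
    exact hζprim k hk1 hkr (by
      have := mul_right_cancel₀ hne (this.trans (one_mul _).symm)
      exact this)
  have hdeg : p.natDegree = r := by
    rw [hp, Matrix.charpoly_natDegree_eq_dim, Fintype.card_fin]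
  have hmonic : p.Monic := Matrix.charpoly_monic M
  have hpform : p = X ^ r + C (p.coeff 0) := by
    ext k
    rw [coeff_add, coeff_X_pow, coeff_C]
    rcases Nat.eq_zero_or_pos k with rfl | hk0
    · rw [if_neg (by omega), if_pos rfl, zero_add]
    · rcases lt_trichotomy k r with hk | rfl | hk
      · rw [if_neg (by omega), if_neg (by omega), hcoeff k hk0 hk, add_zero]
      · rw [if_pos rfl, if_neg (by omega), add_zero]
        have := hmonic.coeff_natDegree
        rwa [hdeg] at this
      · rw [if_neg (by omega), if_neg (by omega), add_zero]
        exact coeff_eq_zero_of_natDegree_lt (hdeg ▸ hk)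
  refine ⟨-(p.coeff 0), ?_⟩
  have := Matrix.aeval_self_charpoly M
  rw [← hp, hpform] at this
  simp only [map_add, map_pow, aeval_X, aeval_C] at this
  have : M ^ r = -(algebraMap ℂ _ (p.coeff 0)) := by
    rw [eq_neg_iff_add_eq_zero]; exact this
  rw [this]
  simp [Algebra.algebraMap_eq_smul_one]

/-- Let `ζ` be a primitive `r`-th root of unity and `A`, `B` invertible
`r × r` complex matrices with `A·B = ζ·(B·A)`.  Then `A ^ r` and `B ^ r` are scalar
matrices. -/
theorem stmt_5 (r : ℕ) (hr : 1 ≤ r) (ζ : ℂ) (hζr : ζ ^ r = 1)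
    (hζprim : ∀ k : ℕ, 1 ≤ k → k < r → ζ ^ k ≠ 1)
    (A B : Matrix (Fin r) (Fin r) ℂ) (hA : IsUnit A) (hB : IsUnit B)
    (hcomm : A * B = ζ • (B * A)) :
    ∃ a b : ℂ, A ^ r = a • (1 : Matrix (Fin r) (Fin r) ℂ) ∧
      B ^ r = b • (1 : Matrix (Fin r) (Fin r) ℂ) := by
  have hAdet : IsUnit A.det := (Matrix.isUnit_iff_isUnit_det A).mp hA
  have hBdet : IsUnit B.det := (Matrix.isUnit_iff_isUnit_det B).mp hB
  have h1 : B⁻¹ * A * B = ζ • A := by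
    rw [Matrix.mul_assoc, hcomm, Matrix.mul_smul, ← Matrix.mul_assoc,
      Matrix.nonsing_inv_mul B hBdet, Matrix.one_mul]
  have h2 : (A⁻¹)⁻¹ * B * A⁻¹ = ζ • B := by
    rw [Matrix.nonsing_inv_nonsing_inv A hAdet, hcomm, Matrix.smul_mul, Matrix.mul_assoc,
      Matrix.mul_nonsing_inv A hAdet, Matrix.mul_one]
  obtain ⟨a, ha⟩ := aux_scalar hr hζr hζprim A B hB h1
  obtain ⟨b, hb⟩ := aux_scalar hr hζr hζprim B A⁻¹ ((Matrix.isUnit_iff_isUnit_det _).mpr (Matrix.isUnit_nonsing_inv_det A hAdet)) h2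
  exact ⟨a, b, ha, hb⟩
end

section
/- Let r ≥ 1 and let ζ ∈ ℂ be a primitive r-th root of unity (ζ^r = 1 and ζ^k ≠ 1 for 1 ≤ k < r). Suppose A, B, A′, B′ are r × r unitary complex matrices satisfying A·B = ζ·(B·A) and A′·B′ = ζ·(B′·A′), and suppose det A = det A′ and det B = det B′. Then the pairs are simultaneously unitarily conjugate: there exists an r × r unitary matrix U with A′ = U·A·U⁻¹ and B′ = U·B·U⁻¹. -/
open Matrix

namespace Stmt6Aux

variable {r : ℕ}

/-- unitary matrices preserve the hermitian inner product. -/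
lemma inner_mulVec (M : Matrix (Fin r) (Fin r) ℂ) (hM : Mᴴ * M = 1)
    (x y : Fin r → ℂ) :
    star (M *ᵥ x) ⬝ᵥ (M *ᵥ y) = star x ⬝ᵥ y := by
  rw [star_mulVec, dotProduct_mulVec, vecMul_vecMul, hM, vecMul_one]

lemma pow_unitary (M : Matrix (Fin r) (Fin r) ℂ) (hM : Mᴴ * M = 1) (k : ℕ) :
    (M ^ k)ᴴ * (M ^ k) = 1 := by
  induction k with
  | zero => simp
  | succ k ih =>
      rw [pow_succ, conjTranspose_mul]
      calc Mᴴ * (M ^ k)ᴴ * (M ^ k * M) = Mᴴ * ((M ^ k)ᴴ * (M ^ k)) * M := by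
            simp only [Matrix.mul_assoc]
        _ = 1 := by rw [ih, Matrix.mul_one, hM]

/-- eigenvalues of a unitary matrix have modulus one. -/
lemma eig_norm (M : Matrix (Fin r) (Fin r) ℂ) (hM : Mᴴ * M = 1)
    {α : ℂ} {x : Fin r → ℂ} (hx : M *ᵥ x = α • x) (hx1 : star x ⬝ᵥ x = 1) :
    star α * α = 1 := by
  have h := inner_mulVec M hM x x
  rw [hx, star_smul, smul_dotProduct, dotProduct_smul, hx1] at h
  simpa [mul_assoc] using h

/-- eigenvectors of a unitary matrix for distinct eigenvalues are orthogonal. -/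
lemma eig_orth (M : Matrix (Fin r) (Fin r) ℂ) (hM : Mᴴ * M = 1)
    {α β : ℂ} {x y : Fin r → ℂ} (hx : M *ᵥ x = α • x) (hy : M *ᵥ y = β • y)
    (hx1 : star x ⬝ᵥ x = 1) (hαβ : α ≠ β) :
    star x ⬝ᵥ y = 0 := by
  have hα : star α * α = 1 := eig_norm M hM hx hx1
  have h := inner_mulVec M hM x y
  rw [hx, hy, star_smul, smul_dotProduct, dotProduct_smul] at h
  -- h : star α * (β * (star x ⬝ᵥ y)) = star x ⬝ᵥ y  (modulo smul_eq_mul)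
  have h' : star α * β * (star x ⬝ᵥ y) = star x ⬝ᵥ y := by
    simpa [smul_eq_mul, mul_assoc] using h
  by_contra hne
  have hαβ1 : star α * β = 1 := by
    have := mul_right_cancel₀ hne (h'.trans (one_mul _).symm)
    exact this
  have : α = β := by
    have hα0 : star α ≠ 0 := by
      intro h0; rw [h0, zero_mul] at hα; exact zero_ne_one hα
    field_simp at hα hαβ1
    -- star α * α = 1 and star α * β = 1 ⇒ α = β
    exact mul_left_cancel₀ hα0 (hα.trans hαβ1.symm)
  exact hαβ this

/-- commutation: from A*B = ζ•(B*A), B shifts eigenvectors of itself along A. -/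
lemma eigvec_shift (A B : Matrix (Fin r) (Fin r) ℂ) (ζ : ℂ) (hζ0 : ζ ≠ 0)
    (h1 : A * B = ζ • (B * A)) {μ : ℂ} {v : Fin r → ℂ} (hv : B *ᵥ v = μ • v) (k : ℕ) :
    B *ᵥ ((A ^ k) *ᵥ v) = (ζ⁻¹ ^ k * μ) • ((A ^ k) *ᵥ v) := by
  have hBA : B * A = ζ⁻¹ • (A * B) := by
    rw [h1, smul_smul, inv_mul_cancel₀ hζ0, one_smul]
  have hcomm : ∀ k : ℕ, B * A ^ k = ζ⁻¹ ^ k • (A ^ k * B) := by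
    intro k
    induction k with
    | zero => simp
    | succ k ih =>
        rw [pow_succ, ← Matrix.mul_assoc, ih, Matrix.smul_mul, Matrix.mul_assoc, hBA,
          Matrix.mul_smul, smul_smul, ← pow_succ, pow_succ, Matrix.mul_assoc]
  rw [mulVec_mulVec, hcomm k, Matrix.smul_mulVec, ← mulVec_mulVec, hv,
    mulVec_smul, smul_smul]


/-- cyclic shift normal form with twist `lam`. -/
def Cmat (r : ℕ) (lam : ℂ) : Matrix (Fin r) (Fin r) ℂ :=
  Matrix.of fun i j => if (j : ℕ) + 1 = (i : ℕ) then 1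
    else if (i : ℕ) = 0 ∧ (j : ℕ) + 1 = r then lam else 0

/-- diagonal normal form. -/
noncomputable def Dmat (r : ℕ) (ζ μ : ℂ) : Matrix (Fin r) (Fin r) ℂ :=
  Matrix.diagonal fun k => ζ⁻¹ ^ (k : ℕ) * μ

lemma det_Cmat (r : ℕ) (hr : 1 ≤ r) (lam : ℂ) :
    (Cmat r lam).det = (Cmat r 1).det * lam := by
  haveI : NeZero r := ⟨by omega⟩
  have hfac : Cmat r lam = Cmat r 1 * Matrix.diagonal
      (fun j : Fin r => if (j : ℕ) + 1 = r then lam else 1) := by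
    ext i j
    rw [Matrix.mul_diagonal]
    simp only [Cmat, Matrix.of_apply]
    by_cases hj : (j : ℕ) + 1 = r
    · have hne : ¬ ((j : ℕ) + 1 = (i : ℕ)) := by
        have := i.isLt; omega
      rw [if_pos hj, if_neg hne, if_neg hne]
      by_cases hi : (i : ℕ) = 0
      · rw [if_pos ⟨hi, hj⟩, if_pos ⟨hi, hj⟩, one_mul]
      · have h2 : ¬ ((i : ℕ) = 0 ∧ (j : ℕ) + 1 = r) := fun h => hi h.1
        rw [if_neg h2, if_neg h2, zero_mul]
    · have h2 : ¬ ((i : ℕ) = 0 ∧ (j : ℕ) + 1 = r) := fun h => hj h.2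
      rw [if_neg hj, mul_one]
      by_cases hji : (j : ℕ) + 1 = (i : ℕ)
      · rw [if_pos hji, if_pos hji]
      · rw [if_neg hji, if_neg hji, if_neg h2, if_neg h2]
  rw [hfac, Matrix.det_mul, Matrix.det_diagonal]
  congr 1
  rw [Finset.prod_eq_single (⟨r - 1, by omega⟩ : Fin r)]
  · simp; omega
  · intro b _ hb
    have : ¬ ((b : ℕ) + 1 = r) := by
      intro h; apply hb; apply Fin.ext; simp; omega
    simp [this]
  · simp


theorem key (r : ℕ) (hr : 1 ≤ r) (ζ : ℂ) (hζ0 : ζ ≠ 0)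
    (hζr : ζ ^ r = 1) (hζprim : ∀ k : ℕ, 1 ≤ k → k < r → ζ ^ k ≠ 1)
    (A B : Matrix (Fin r) (Fin r) ℂ)
    (hA : Aᴴ * A = 1) (hB : Bᴴ * B = 1)
    (h1 : A * B = ζ • (B * A))
    (μ : ℂ) (v : Fin r → ℂ) (hv : B *ᵥ v = μ • v) (hv1 : star v ⬝ᵥ v = 1) :
    ∃ (P : Matrix (Fin r) (Fin r) ℂ) (lam : ℂ),
      P * Pᴴ = 1 ∧ A = P * Cmat r lam * Pᴴ ∧ B = P * Dmat r ζ μ * Pᴴ := by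
  haveI : NeZero r := ⟨by omega⟩
  set ξ : ℂ := ζ⁻¹ with hξdef
  have hξ0 : ξ ≠ 0 := inv_ne_zero hζ0
  have hμ : star μ * μ = 1 := eig_norm B hB hv hv1
  have hμ0 : μ ≠ 0 := by
    intro h; rw [h, mul_zero] at hμ; exact zero_ne_one hμ
  -- the orthonormal system
  set e : Fin r → (Fin r → ℂ) := fun k => (A ^ (k : ℕ)) *ᵥ v with he
  have heig : ∀ k : ℕ, B *ᵥ ((A ^ k) *ᵥ v) = (ξ ^ k * μ) • ((A ^ k) *ᵥ v) :=
    fun k => eigvec_shift A B ζ hζ0 h1 hv k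
  have hnorm : ∀ k : ℕ, star ((A ^ k) *ᵥ v) ⬝ᵥ ((A ^ k) *ᵥ v) = 1 := by
    intro k
    rw [inner_mulVec _ (pow_unitary A hA k), hv1]
  have hξpow : ∀ j k : ℕ, j < r → k < r → ξ ^ j = ξ ^ k → j = k := by
    intro j k hj hk hjk
    by_contra hne
    rcases Nat.lt_or_ge j k with h | h
    · have : ξ ^ j * ξ ^ (k - j) = ξ ^ j * 1 := by
        rw [mul_one, ← pow_add]
        rw [hjk]; congr 1; omega
      have h2 : ξ ^ (k - j) = 1 := mul_left_cancel₀ (pow_ne_zero _ hξ0) this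
      have h3 : ζ ^ (k - j) = 1 := by
        have := congrArg (·⁻¹) h2
        simpa [hξdef, ← inv_pow] using this
      exact hζprim (k - j) (by omega) (by omega) h3
    · have hne' : j ≠ k := hne
      have : ξ ^ k * ξ ^ (j - k) = ξ ^ k * 1 := by
        rw [mul_one, ← pow_add]
        rw [← hjk]; congr 1; omega
      have h2 : ξ ^ (j - k) = 1 := mul_left_cancel₀ (pow_ne_zero _ hξ0) this
      have h3 : ζ ^ (j - k) = 1 := by
        have := congrArg (·⁻¹) h2
        simpa [hξdef, ← inv_pow] using this
      exact hζprim (j - k) (by omega) (by omega) h3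
  have hdist : ∀ j k : ℕ, j < r → k < r → j ≠ k → ξ ^ j * μ ≠ ξ ^ k * μ := by
    intro j k hj hk hjk h
    exact hjk (hξpow j k hj hk (mul_right_cancel₀ hμ0 h))
  have horth : ∀ j k : Fin r, j ≠ k → star (e j) ⬝ᵥ e k = 0 := by
    intro j k hjk
    exact eig_orth B hB (heig j) (heig k) (hnorm j)
      (hdist j k j.isLt k.isLt (fun h => hjk (Fin.ext h)))
  set P : Matrix (Fin r) (Fin r) ℂ := Matrix.of (fun i k => e k i) with hPdef
  have hP1 : Pᴴ * P = 1 := by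
    ext j k
    have : (Pᴴ * P) j k = star (e j) ⬝ᵥ e k := by
      simp [Matrix.mul_apply, conjTranspose_apply, dotProduct, hPdef]
    rw [this]
    by_cases hjk : j = k
    · subst hjk; rw [hnorm j, Matrix.one_apply_eq]
    · rw [horth j k hjk, (Matrix.one_apply_ne hjk).symm]
  have hP2 : P * Pᴴ = 1 := mul_eq_one_comm.mp hP1
  -- A^r acts on v as a scalar
  set lam : ℂ := star v ⬝ᵥ ((A ^ r) *ᵥ v) with hlamdef
  have hv0 : v = e 0 := by
    simp [he, Fin.val_zero]
  have hArv : (A ^ r) *ᵥ v = lam • v := by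
    set w : Fin r → ℂ := (A ^ r) *ᵥ v with hw
    have hweig : B *ᵥ w = μ • w := by
      have := heig r
      rwa [hξdef, inv_pow, hζr, inv_one, one_mul] at this
    have hcoef : ∀ k : Fin r, (Pᴴ *ᵥ w) k = if k = 0 then lam else 0 := by
      intro k
      have hk : (Pᴴ *ᵥ w) k = star (e k) ⬝ᵥ w := by
        simp [Matrix.mulVec, conjTranspose_apply, dotProduct, hPdef]
      rw [hk]
      by_cases h0 : k = 0
      · subst h0
        rw [if_pos rfl, hlamdef, ← hv0]
      · rw [if_neg h0]
        refine eig_orth B hB (heig (k : ℕ)) hweig (hnorm k) ?_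
        have hk0 : (k : ℕ) ≠ 0 := fun h => h0 (Fin.ext h)
        have := hdist (k : ℕ) 0 k.isLt (by omega) hk0
        simpa using this
    have : w = P *ᵥ (Pᴴ *ᵥ w) := by
      rw [mulVec_mulVec, hP2, one_mulVec]
    rw [this]
    funext i
    rw [Matrix.mulVec, dotProduct]
    rw [Finset.sum_eq_single (0 : Fin r)]
    · rw [hcoef 0, if_pos rfl, Pi.smul_apply, smul_eq_mul, mul_comm]
      congr 1
      rw [hPdef]
      show e 0 i = v i
      rw [← hv0]
    · intro b _ hb
      rw [hcoef b, if_neg hb, mul_zero]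
    · simp
  have hAP : A * P = P * Cmat r lam := by
    ext i k
    have hL : (A * P) i k = ((A ^ ((k : ℕ) + 1)) *ᵥ v) i := by
      have : (A * P) i k = (A *ᵥ e k) i := by
        simp [Matrix.mul_apply, Matrix.mulVec, dotProduct, hPdef]
      rw [this, he]
      show (A *ᵥ ((A ^ (k:ℕ)) *ᵥ v)) i = _
      rw [mulVec_mulVec, ← pow_succ']
    rw [hL, Matrix.mul_apply]
    by_cases hk : (k : ℕ) + 1 = r
    · rw [Finset.sum_eq_single (0 : Fin r)]
      · have hC : Cmat r lam 0 k = lam := by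
          have hne : ¬ ((k : ℕ) + 1 = ((0 : Fin r) : ℕ)) := by simp
          simp [Cmat, hne, hk]
          intro h; exact absurd h (by omega)
        rw [hC, hk, hArv]
        rw [hPdef]
        show lam • v i = e 0 i * lam
        rw [← hv0, smul_eq_mul, mul_comm]
      · intro b _ hb
        have h1' : ¬ ((k : ℕ) + 1 = (b : ℕ)) := by
          have := b.isLt; omega
        have h2' : ¬ ((b : ℕ) = 0 ∧ (k : ℕ) + 1 = r) := by
          intro h; exact hb (Fin.ext h.1)
        simp [Cmat, h1', h2', hb]
      · simp
    · have hklt : (k : ℕ) + 1 < r := by have := k.isLt; omega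
      rw [Finset.sum_eq_single (⟨(k : ℕ) + 1, hklt⟩ : Fin r)]
      · have hC : Cmat r lam ⟨(k : ℕ) + 1, hklt⟩ k = 1 := by
          simp [Cmat]
        rw [hC, mul_one, hPdef]
        rfl
      · intro b _ hb
        have h1' : ¬ ((k : ℕ) + 1 = (b : ℕ)) := by
          intro h; exact hb (Fin.ext h.symm)
        have h2' : ¬ ((b : ℕ) = 0 ∧ (k : ℕ) + 1 = r) := fun h => hk h.2
        simp [Cmat, h1', h2', hk]
      · simp
  have hBP : B * P = P * Dmat r ζ μ := by
    ext i k
    have hL : (B * P) i k = (B *ᵥ e k) i := by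
      simp [Matrix.mul_apply, Matrix.mulVec, dotProduct, hPdef]
    rw [hL, Dmat, Matrix.mul_diagonal, he]
    show (B *ᵥ ((A ^ (k:ℕ)) *ᵥ v)) i = _
    rw [heig (k : ℕ), Pi.smul_apply, smul_eq_mul, mul_comm]
    rfl
  refine ⟨P, lam, hP2, ?_, ?_⟩
  · calc A = A * (P * Pᴴ) := by rw [hP2, Matrix.mul_one]
      _ = (A * P) * Pᴴ := by rw [Matrix.mul_assoc]
      _ = P * Cmat r lam * Pᴴ := by rw [hAP]
  · calc B = B * (P * Pᴴ) := by rw [hP2, Matrix.mul_one]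
      _ = (B * P) * Pᴴ := by rw [Matrix.mul_assoc]
      _ = P * Dmat r ζ μ * Pᴴ := by rw [hBP]


lemma det_conj (P X : Matrix (Fin r) (Fin r) ℂ) (hP : P * Pᴴ = 1) :
    (P * X * Pᴴ).det = X.det := by
  have h1 : P.det * Pᴴ.det = 1 := by
    rw [← Matrix.det_mul, hP, Matrix.det_one]
  rw [Matrix.det_mul, Matrix.det_mul]
  calc P.det * X.det * Pᴴ.det = X.det * (P.det * Pᴴ.det) := by ring
    _ = X.det := by rw [h1, mul_one]

lemma det_Dmat (r : ℕ) (ζ μ : ℂ) :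
    (Dmat r ζ μ).det = (∏ k : Fin r, ζ⁻¹ ^ (k : ℕ)) * μ ^ r := by
  rw [Dmat, Matrix.det_diagonal, Finset.prod_mul_distrib, Finset.prod_const,
    Finset.card_univ, Fintype.card_fin]

lemma exists_unit_eigvec (r : ℕ) (hr : 1 ≤ r) (B : Matrix (Fin r) (Fin r) ℂ) :
    ∃ (μ : ℂ) (v : Fin r → ℂ), B *ᵥ v = μ • v ∧ star v ⬝ᵥ v = 1 := by
  haveI : NeZero r := ⟨by omega⟩
  haveI : Nontrivial (Fin r → ℂ) := ⟨0, fun _ => 1, by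
    intro h
    exact one_ne_zero (congrFun h.symm 0)⟩
  obtain ⟨μ, hμ⟩ := Module.End.exists_eigenvalue (Matrix.mulVecLin B : Module.End ℂ (Fin r → ℂ))
  obtain ⟨v, hv⟩ := hμ.exists_hasEigenvector
  have hvv : B *ᵥ v = μ • v := by
    have := Module.End.mem_eigenspace_iff.mp hv.1
    simpa [Matrix.mulVecLin_apply] using this
  have hv0 : v ≠ 0 := hv.2
  set s : ℝ := ∑ i, Complex.normSq (v i) with hs
  have hspos : 0 < s := by
    have hex : ∃ i, v i ≠ 0 := by
      by_contra h; push_neg at h; exact hv0 (funext h)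
    obtain ⟨i, hi⟩ := hex
    exact Finset.sum_pos' (fun j _ => Complex.normSq_nonneg _)
      ⟨i, Finset.mem_univ i, Complex.normSq_pos.mpr hi⟩
  set c : ℂ := (((Real.sqrt s)⁻¹ : ℝ) : ℂ) with hc
  refine ⟨μ, c • v, ?_, ?_⟩
  · rw [mulVec_smul, hvv, smul_comm]
  · have h1 : star v ⬝ᵥ v = (s : ℂ) := by
      rw [dotProduct, hs]
      push_cast
      refine Finset.sum_congr rfl fun i _ => ?_
      rw [Pi.star_apply, Complex.star_def, Complex.normSq_eq_conj_mul_self]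
    have h2 : star (c • v) ⬝ᵥ (c • v) = star c * c * (star v ⬝ᵥ v) := by
      rw [star_smul, smul_dotProduct, dotProduct_smul, smul_eq_mul, smul_eq_mul, mul_assoc]
    rw [h2, h1, hc, Complex.star_def, Complex.conj_ofReal]
    rw [← Complex.ofReal_mul, ← Complex.ofReal_mul]
    norm_cast
    rw [← Real.sqrt_inv]
    rw [Real.mul_self_sqrt (by positivity)]
    field_simp

end Stmt6Aux

open Stmt6Aux

/-- Let `ζ` be a primitive `r`-th root of unity.  Two pairs of
unitary matrices `(A, B)` and `(A', B')` with `A·B = ζ·(B·A)`, `A'·B' = ζ·(B'·A')`,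
`det A = det A'` and `det B = det B'` are simultaneously unitarily conjugate. -/
theorem stmt_6 (r : ℕ) (hr : 1 ≤ r) (ζ : ℂ) (hζr : ζ ^ r = 1)
    (hζprim : ∀ k : ℕ, 1 ≤ k → k < r → ζ ^ k ≠ 1)
    (A B A' B' : Matrix (Fin r) (Fin r) ℂ)
    (hA : A * Aᴴ = 1) (hB : B * Bᴴ = 1) (hA' : A' * A'ᴴ = 1) (hB' : B' * B'ᴴ = 1)
    (h1 : A * B = ζ • (B * A)) (h2 : A' * B' = ζ • (B' * A'))
    (hdetA : A.det = A'.det) (hdetB : B.det = B'.det) :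
    ∃ U : Matrix (Fin r) (Fin r) ℂ, U * Uᴴ = 1 ∧ A' = U * A * U⁻¹ ∧ B' = U * B * U⁻¹ := by
  haveI : NeZero r := ⟨by omega⟩
  have hζ0 : ζ ≠ 0 := by
    intro h
    rw [h, zero_pow (by omega)] at hζr
    exact zero_ne_one hζr
  have hAu : Aᴴ * A = 1 := mul_eq_one_comm.mp hA
  have hBu : Bᴴ * B = 1 := mul_eq_one_comm.mp hB
  have hA'u : A'ᴴ * A' = 1 := mul_eq_one_comm.mp hA'
  have hB'u : B'ᴴ * B' = 1 := mul_eq_one_comm.mp hB'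
  -- unit eigenvectors
  obtain ⟨μ, u, huv, hu1⟩ := exists_unit_eigvec r hr B
  obtain ⟨μ', u', hu'v, hu'1⟩ := exists_unit_eigvec r hr B'
  have hμ0 : μ ≠ 0 := by
    have h := eig_norm B hBu huv hu1
    intro h0; rw [h0, mul_zero] at h; exact zero_ne_one h
  have hμ'0 : μ' ≠ 0 := by
    have h := eig_norm B' hB'u hu'v hu'1
    intro h0; rw [h0, mul_zero] at h; exact zero_ne_one h
  -- the two pairs in normal form (for B' with provisional eigenvalue μ')
  obtain ⟨P, lam, hPP, hAeq, hBeq⟩ :=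
    key r hr ζ hζ0 hζr hζprim A B hAu hBu h1 μ u huv hu1
  obtain ⟨Q₀, lam₀, hQ₀Q₀, hA'eq₀, hB'eq₀⟩ :=
    key r hr ζ hζ0 hζr hζprim A' B' hA'u hB'u h2 μ' u' hu'v hu'1
  -- determinants of B force μ^r = μ'^r
  have hdB : (∏ k : Fin r, ζ⁻¹ ^ (k : ℕ)) * μ ^ r = (∏ k : Fin r, ζ⁻¹ ^ (k : ℕ)) * μ' ^ r := by
    have e1 : B.det = (∏ k : Fin r, ζ⁻¹ ^ (k : ℕ)) * μ ^ r := by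
      rw [hBeq, det_conj _ _ hPP, det_Dmat]
    have e2 : B'.det = (∏ k : Fin r, ζ⁻¹ ^ (k : ℕ)) * μ' ^ r := by
      rw [hB'eq₀, det_conj _ _ hQ₀Q₀, det_Dmat]
    rw [← e1, ← e2, hdetB]
  have hprod0 : (∏ k : Fin r, ζ⁻¹ ^ (k : ℕ)) ≠ 0 :=
    Finset.prod_ne_zero_iff.mpr fun k _ => pow_ne_zero _ (inv_ne_zero hζ0)
  have hμr : μ ^ r = μ' ^ r := mul_left_cancel₀ hprod0 hdB
  -- μ/μ' is an r-th root of unity, hence a power of ζ⁻¹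
  have hζpr : IsPrimitiveRoot ζ r := by
    refine ⟨hζr, fun l hl => ?_⟩
    have h2' : ζ ^ (r * (l / r) + l % r) = 1 := by
      rw [Nat.div_add_mod]; exact hl
    rw [pow_add, pow_mul, hζr, one_pow, one_mul] at h2'
    by_cases h : l % r = 0
    · exact Nat.dvd_of_mod_eq_zero h
    · exact absurd h2' (hζprim _ (by omega) (Nat.mod_lt _ (by omega)))
  have hroot : (μ * μ'⁻¹) ^ r = 1 := by
    rw [mul_pow, hμr, inv_pow, mul_inv_cancel₀ (pow_ne_zero _ hμ'0)]
  obtain ⟨i, hi, hieq⟩ := (hζpr.inv).eq_pow_of_pow_eq_one hroot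
  have hμeq : μ = ζ⁻¹ ^ i * μ' := by
    rw [hieq]
    field_simp
  -- a unit eigenvector of B' with eigenvalue μ
  set v'' : Fin r → ℂ := (A' ^ i) *ᵥ u' with hv''
  have hv''eig : B' *ᵥ v'' = μ • v'' := by
    rw [hv'', eigvec_shift A' B' ζ hζ0 h2 hu'v i, ← hμeq]
  have hv''1 : star v'' ⬝ᵥ v'' = 1 := by
    rw [hv'', inner_mulVec _ (pow_unitary A' hA'u i), hu'1]
  obtain ⟨Q, lam', hQQ, hA'eq, hB'eq⟩ :=
    key r hr ζ hζ0 hζr hζprim A' B' hA'u hB'u h2 μ v'' hv''eig hv''1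
  -- determinants of A force lam = lam'
  have hdetA0 : A.det ≠ 0 := by
    intro h0
    have : A.det * Aᴴ.det = 1 := by rw [← Matrix.det_mul, hA, Matrix.det_one]
    rw [h0, zero_mul] at this
    exact zero_ne_one this
  have hdA : (Cmat r 1).det * lam = (Cmat r 1).det * lam' := by
    have e1 : A.det = (Cmat r 1).det * lam := by
      rw [hAeq, det_conj _ _ hPP, det_Cmat r hr]
    have e2 : A'.det = (Cmat r 1).det * lam' := by
      rw [hA'eq, det_conj _ _ hQQ, det_Cmat r hr]
    rw [← e1, ← e2, hdetA]
  have hK0 : (Cmat r 1).det ≠ 0 := by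
    intro h0
    apply hdetA0
    rw [hAeq, det_conj _ _ hPP, det_Cmat r hr, h0, zero_mul]
  have hlam : lam = lam' := mul_left_cancel₀ hK0 hdA
  -- assemble the conjugating unitary
  have hP1 : Pᴴ * P = 1 := mul_eq_one_comm.mp hPP
  have hQ1 : Qᴴ * Q = 1 := mul_eq_one_comm.mp hQQ
  refine ⟨Q * Pᴴ, ?_, ?_, ?_⟩
  · rw [conjTranspose_mul, conjTranspose_conjTranspose]
    calc Q * Pᴴ * (P * Qᴴ) = Q * (Pᴴ * P) * Qᴴ := by simp only [Matrix.mul_assoc]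
      _ = 1 := by rw [hP1, Matrix.mul_one, hQQ]
  all_goals {
    have hUinv : (Q * Pᴴ)⁻¹ = P * Qᴴ := by
      apply Matrix.inv_eq_right_inv
      calc Q * Pᴴ * (P * Qᴴ) = Q * (Pᴴ * P) * Qᴴ := by simp only [Matrix.mul_assoc]
        _ = 1 := by rw [hP1, Matrix.mul_one, hQQ]
    rw [hUinv]
    first
    | (rw [hA'eq, hAeq, hlam]
       symm
       calc Q * Pᴴ * (P * Cmat r lam' * Pᴴ) * (P * Qᴴ)
           = Q * ((Pᴴ * P) * (Cmat r lam' * ((Pᴴ * P) * Qᴴ))) := by simp only [Matrix.mul_assoc]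
         _ = Q * Cmat r lam' * Qᴴ := by
             rw [hP1, Matrix.one_mul, Matrix.one_mul, Matrix.mul_assoc])
    | (rw [hB'eq, hBeq]
       symm
       calc Q * Pᴴ * (P * Dmat r ζ μ * Pᴴ) * (P * Qᴴ)
           = Q * ((Pᴴ * P) * (Dmat r ζ μ * ((Pᴴ * P) * Qᴴ))) := by simp only [Matrix.mul_assoc]
         _ = Q * Dmat r ζ μ * Qᴴ := by
             rw [hP1, Matrix.one_mul, Matrix.one_mul, Matrix.mul_assoc])
  }
end

section
/- Let f : ℂ × ℂ × ℂ → ℂ be an entire function (complex differentiable at every point of ℂ³). Define F : ℂ⁴ → ℂ by F(p, q, r, s) = ∮_{|z|=1} f(z, p·z + q, r·z + s) dz, the contour integral over the unit circle centered at 0. Then F satisfies the ultrahyperbolic equation ∂²F/∂p∂s = ∂²F/∂q∂r; that is, for all (p, q, r, s) ∈ ℂ⁴, the complex derivative in p of the function p′ ↦ (derivative in s of s′ ↦ F(p′, q, r, s′)) equals the complex derivative in q of the function q′ ↦ (derivative in r of r′ ↦ F(p, q′, r′, s)). -/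
open MeasureTheory intervalIntegral Metric Real Complex Set Function

noncomputable section

namespace Stmt7Aux

/-- Differentiation under an interval integral, for jointly continuous integrand and
jointly continuous derivative. -/
lemma hasDerivAt_param_integral
    (g g' : ℂ → ℝ → ℂ)
    (hg : Continuous fun p : ℂ × ℝ => g p.1 p.2)
    (hg' : Continuous fun p : ℂ × ℝ => g' p.1 p.2)
    (hdiff : ∀ x θ, HasDerivAt (fun x => g x θ) (g' x θ) x)
    (x₀ : ℂ) (a b : ℝ) :
    HasDerivAt (fun x => ∫ θ in a..b, g x θ) (∫ θ in a..b, g' x₀ θ) x₀ := by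
  obtain ⟨C, hC⟩ : ∃ C, ∀ p ∈ (closedBall x₀ 1 ×ˢ uIcc a b),
      ‖(fun p : ℂ × ℝ => g' p.1 p.2) p‖ ≤ C :=
    ((isCompact_closedBall x₀ 1).prod isCompact_uIcc).exists_bound_of_continuousOn
      hg'.continuousOn
  have H := intervalIntegral.hasDerivAt_integral_of_dominated_loc_of_deriv_le
      (F := fun x θ => g x θ) (F' := fun x θ => g' x θ) (x₀ := x₀) (a := a) (b := b)
      (μ := volume) (bound := fun _ => C) (ball_mem_nhds x₀ one_pos)
      (Filter.Eventually.of_forall fun x =>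
        (hg.comp (Continuous.prodMk_right x)).aestronglyMeasurable)
      ((hg.comp (Continuous.prodMk_right x₀)).intervalIntegrable a b)
      (hg'.comp (Continuous.prodMk_right x₀)).aestronglyMeasurable
      (Filter.Eventually.of_forall fun t ht x hx =>
        hC (x, t) ⟨ball_subset_closedBall hx, Set.Ioc_subset_Icc_self ht⟩)
      (intervalIntegrable_const)
      (Filter.Eventually.of_forall fun t _ x _ => hdiff x t)
  exact H.2

/-- Cauchy formula for the derivative, written as an explicit interval integral. -/
lemma deriv_eq_circle_rep (h : ℂ → ℂ) (hh : Differentiable ℂ h) (c : ℂ) :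
    deriv h c = (2 * ↑π * I)⁻¹ * ∫ θ in (0:ℝ)..(2*π),
      circleMap 0 1 θ * I * (((circleMap 0 1 θ)^2)⁻¹ * h (circleMap c 1 θ)) := by
  have H := two_pi_I_inv_smul_circleIntegral_sub_sq_inv_smul_of_differentiable
      (U := Set.univ) isOpen_univ (Set.subset_univ (closedBall c 1))
      (hh.differentiableOn) (mem_ball_self one_pos)
  rw [← H]
  simp [circleIntegral, deriv_circleMap, circleMap_sub_center, smul_eq_mul, mul_assoc]

lemma continuous_circleMap2 : Continuous fun p : ℂ × ℝ => circleMap p.1 1 p.2 := by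
  unfold circleMap
  fun_prop

/-- Joint continuity of a parametric complex derivative. -/
lemma continuous_pderiv {X : Type*} [TopologicalSpace X]
    (h : X → ℂ → ℂ) (hh : Continuous fun p : X × ℂ => h p.1 p.2)
    (hd : ∀ x, Differentiable ℂ (h x)) :
    Continuous fun p : X × ℂ => deriv (h p.1) p.2 := by
  have key : ∀ p : X × ℂ, deriv (h p.1) p.2 = (2 * ↑π * I)⁻¹ * ∫ θ in (0:ℝ)..(2*π),
      circleMap 0 1 θ * I * (((circleMap 0 1 θ)^2)⁻¹ * h p.1 (circleMap p.2 1 θ)) :=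
    fun p => deriv_eq_circle_rep (h p.1) (hd p.1) p.2
  simp only [key]
  refine continuous_const.mul ?_
  refine continuous_parametric_intervalIntegral_of_continuous' (μ := volume) ?_ 0 (2*π)
  rw [Function.uncurry_def]
  have h1 : Continuous fun q : (X × ℂ) × ℝ => circleMap 0 1 q.2 :=
    (continuous_circleMap 0 1).comp continuous_snd
  have h2 : Continuous fun q : (X × ℂ) × ℝ => h q.1.1 (circleMap q.1.2 1 q.2) :=
    hh.comp ((continuous_fst.fst).prodMk
      (continuous_circleMap2.comp ((continuous_fst.snd).prodMk continuous_snd)))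
  exact (h1.mul continuous_const).mul
    (((h1.pow 2).inv₀ fun q => pow_ne_zero 2 (circleMap_ne_center one_ne_zero)).mul h2)

variable (f : ℂ × ℂ × ℂ → ℂ)

/-- partial derivative in the third slot -/
def P (a b c : ℂ) : ℂ := deriv (fun c' => f (a, b, c')) c
/-- partial derivative in the second slot -/
def Q (a b c : ℂ) : ℂ := deriv (fun b' => f (a, b', c)) b
/-- mixed second partial: second slot of the third-slot partial -/
def D (a b c : ℂ) : ℂ := deriv (fun b' => P f a b' c) b

variable (hf : Differentiable ℂ f)
include hf

lemma diff3 (a b : ℂ) : Differentiable ℂ (fun c' => f (a, b, c')) :=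
  hf.comp ((differentiable_const _).prodMk ((differentiable_const _).prodMk differentiable_id))

lemma diff2 (a c : ℂ) : Differentiable ℂ (fun b' => f (a, b', c)) :=
  hf.comp ((differentiable_const _).prodMk (differentiable_id.prodMk (differentiable_const _)))

lemma hP_cont : Continuous fun v : ℂ × ℂ × ℂ => P f v.1 v.2.1 v.2.2 := by
  have H := continuous_pderiv (X := ℂ × ℂ) (fun x c => f (x.1, x.2, c))
    (hf.continuous.comp (by fun_prop)) (fun x => diff3 f hf x.1 x.2)
  exact H.comp ((continuous_fst.prodMk (continuous_snd.fst)).prodMk (continuous_snd.snd))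

lemma hQ_cont : Continuous fun v : ℂ × ℂ × ℂ => Q f v.1 v.2.1 v.2.2 := by
  have H := continuous_pderiv (X := ℂ × ℂ) (fun x b => f (x.1, b, x.2))
    (hf.continuous.comp (by fun_prop)) (fun x => diff2 f hf x.1 x.2)
  exact H.comp ((continuous_fst.prodMk (continuous_snd.snd)).prodMk (continuous_snd.fst))

lemma hasDerivAt_P_b (a c b : ℂ) : HasDerivAt (fun b' => P f a b' c) (D f a b c) b := by
  have rep : (fun b' => P f a b' c) = fun b' => (2 * ↑π * I)⁻¹ * ∫ θ in (0:ℝ)..(2*π),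
      circleMap 0 1 θ * I * (((circleMap 0 1 θ)^2)⁻¹ * f (a, b', circleMap c 1 θ)) :=
    funext fun b' => deriv_eq_circle_rep (fun c' => f (a, b', c')) (diff3 f hf a b') c
  have key : ∀ b : ℂ, HasDerivAt (fun b' => P f a b' c)
      ((2 * ↑π * I)⁻¹ * ∫ θ in (0:ℝ)..(2*π),
        circleMap 0 1 θ * I * (((circleMap 0 1 θ)^2)⁻¹ * Q f a b (circleMap c 1 θ))) b := by
    intro b
    rw [rep]
    refine HasDerivAt.const_mul _ ?_
    refine hasDerivAt_param_integral
      (fun b' θ => circleMap 0 1 θ * I * (((circleMap 0 1 θ)^2)⁻¹ * f (a, b', circleMap c 1 θ)))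
      (fun b' θ => circleMap 0 1 θ * I * (((circleMap 0 1 θ)^2)⁻¹ * Q f a b' (circleMap c 1 θ)))
      ?_ ?_ ?_ b 0 (2*π)
    · have h1 : Continuous fun q : ℂ × ℝ => circleMap 0 1 q.2 :=
        (continuous_circleMap 0 1).comp continuous_snd
      have h2 : Continuous fun q : ℂ × ℝ => f (a, q.1, circleMap c 1 q.2) :=
        hf.continuous.comp (by fun_prop)
      exact (h1.mul continuous_const).mul
        (((h1.pow 2).inv₀ fun q => pow_ne_zero 2 (circleMap_ne_center one_ne_zero)).mul h2)
    · have h1 : Continuous fun q : ℂ × ℝ => circleMap 0 1 q.2 :=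
        (continuous_circleMap 0 1).comp continuous_snd
      have h2 : Continuous fun q : ℂ × ℝ => Q f a q.1 (circleMap c 1 q.2) :=
        (hQ_cont f hf).comp (continuous_const.prodMk
          (continuous_fst.prodMk ((continuous_circleMap2.comp
            (continuous_const.prodMk continuous_snd)))))
      exact (h1.mul continuous_const).mul
        (((h1.pow 2).inv₀ fun q => pow_ne_zero 2 (circleMap_ne_center one_ne_zero)).mul h2)
    · intro b' θ
      have h0 : HasDerivAt (fun b'' => f (a, b'', circleMap c 1 θ))
          (Q f a b' (circleMap c 1 θ)) b' :=
        ((diff2 f hf a (circleMap c 1 θ)) b').hasDerivAt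
      exact (h0.const_mul _).const_mul _
  exact (key b).differentiableAt.hasDerivAt

lemma hD_cont : Continuous fun v : ℂ × ℂ × ℂ => D f v.1 v.2.1 v.2.2 := by
  have H := continuous_pderiv (X := ℂ × ℂ) (fun x b => P f x.1 b x.2)
    ((hP_cont f hf).comp ((continuous_fst.fst).prodMk
      (continuous_snd.prodMk continuous_fst.snd)))
    (fun x => fun b => (hasDerivAt_P_b f hf x.1 x.2 b).differentiableAt)
  exact H.comp ((continuous_fst.prodMk (continuous_snd.snd)).prodMk (continuous_snd.fst))

end Stmt7Aux

open Stmt7Aux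

/-- Let `f : ℂ × ℂ × ℂ → ℂ` be entire and define
`F (p, q, r, s) = ∮_{|z|=1} f (z, p·z + q, r·z + s) dz`.  Then `F` satisfies the
ultrahyperbolic equation `∂²F/∂p∂s = ∂²F/∂q∂r`. -/
theorem stmt_7 (f : ℂ × ℂ × ℂ → ℂ) (hf : Differentiable ℂ f)
    (F : ℂ → ℂ → ℂ → ℂ → ℂ)
    (hF : ∀ p q r s : ℂ, F p q r s = ∮ z in C(0, 1), f (z, p * z + q, r * z + s))
    (p q r s : ℂ) :
    deriv (fun p' => deriv (fun s' => F p' q r s') s) p =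
      deriv (fun q' => deriv (fun r' => F p q' r' s) r) q := by
  have hcm : Continuous (circleMap 0 1) := continuous_circleMap 0 1
  have hc2 : Continuous fun x : ℂ × ℝ => circleMap 0 1 x.2 := hcm.comp continuous_snd
  have K : ∀ (Φ : ℂ × ℂ × ℂ → ℂ), Continuous Φ → ∀ (u v w : ℂ × ℝ → ℂ),
      Continuous u → Continuous v → Continuous w →
      Continuous fun x : ℂ × ℝ => Φ (u x, v x, w x) :=
    fun Φ hΦ u v w hu hv hw => hΦ.comp (hu.prodMk (hv.prodMk hw))
  have hPc := hP_cont f hf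
  have hDc := hD_cont f hf
  have hF' : ∀ p' q' r' s' : ℂ, F p' q' r' s' =
      ∫ θ in (0:ℝ)..(2*π), circleMap 0 1 θ * I *
        f (circleMap 0 1 θ, p' * circleMap 0 1 θ + q', r' * circleMap 0 1 θ + s') := by
    intro p' q' r' s'
    rw [hF]
    simp [circleIntegral, deriv_circleMap, smul_eq_mul, mul_assoc]
  -- LHS inner derivative
  have L1 : ∀ p', HasDerivAt (fun s' => F p' q r s')
      (∫ θ in (0:ℝ)..(2*π), circleMap 0 1 θ * I *
        P f (circleMap 0 1 θ) (p' * circleMap 0 1 θ + q) (r * circleMap 0 1 θ + s)) s := by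
    intro p'
    have e1 : (fun s' => F p' q r s') = fun s' => ∫ θ in (0:ℝ)..(2*π),
        circleMap 0 1 θ * I *
        f (circleMap 0 1 θ, p' * circleMap 0 1 θ + q, r * circleMap 0 1 θ + s') :=
      funext fun s' => hF' p' q r s'
    rw [e1]
    refine hasDerivAt_param_integral
      (fun s' θ => circleMap 0 1 θ * I *
        f (circleMap 0 1 θ, p' * circleMap 0 1 θ + q, r * circleMap 0 1 θ + s'))
      (fun s' θ => circleMap 0 1 θ * I *
        P f (circleMap 0 1 θ) (p' * circleMap 0 1 θ + q) (r * circleMap 0 1 θ + s'))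
      ?_ ?_ ?_ s 0 (2*π)
    · exact (hc2.mul continuous_const).mul (K f hf.continuous _ _ _ hc2
        ((continuous_const.mul hc2).add continuous_const)
        ((continuous_const.mul hc2).add continuous_fst))
    · exact (hc2.mul continuous_const).mul
        (K (fun v => P f v.1 v.2.1 v.2.2) hPc _ _ _ hc2
          ((continuous_const.mul hc2).add continuous_const)
          ((continuous_const.mul hc2).add continuous_fst))
    · intro s' θ
      have h0 : HasDerivAt (fun c' => f (circleMap 0 1 θ, p' * circleMap 0 1 θ + q, c'))
          (P f (circleMap 0 1 θ) (p' * circleMap 0 1 θ + q) (r * circleMap 0 1 θ + s'))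
          (r * circleMap 0 1 θ + s') :=
        ((diff3 f hf _ _) _).hasDerivAt
      have h1 : HasDerivAt (fun s'' : ℂ => r * circleMap 0 1 θ + s'') 1 s' :=
        (hasDerivAt_id s').const_add _
      simpa using (h0.comp s' h1).const_mul (circleMap 0 1 θ * I)
  -- LHS outer derivative
  have L2 : HasDerivAt (fun p' => ∫ θ in (0:ℝ)..(2*π), circleMap 0 1 θ * I *
        P f (circleMap 0 1 θ) (p' * circleMap 0 1 θ + q) (r * circleMap 0 1 θ + s))
      (∫ θ in (0:ℝ)..(2*π), circleMap 0 1 θ * I *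
        (D f (circleMap 0 1 θ) (p * circleMap 0 1 θ + q) (r * circleMap 0 1 θ + s)
          * circleMap 0 1 θ)) p := by
    refine hasDerivAt_param_integral
      (fun p' θ => circleMap 0 1 θ * I *
        P f (circleMap 0 1 θ) (p' * circleMap 0 1 θ + q) (r * circleMap 0 1 θ + s))
      (fun p' θ => circleMap 0 1 θ * I *
        (D f (circleMap 0 1 θ) (p' * circleMap 0 1 θ + q) (r * circleMap 0 1 θ + s)
          * circleMap 0 1 θ))
      ?_ ?_ ?_ p 0 (2*π)
    · exact (hc2.mul continuous_const).mul
        (K (fun v => P f v.1 v.2.1 v.2.2) hPc _ _ _ hc2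
          ((continuous_fst.mul hc2).add continuous_const)
          ((continuous_const.mul hc2).add continuous_const))
    · exact (hc2.mul continuous_const).mul
        ((K (fun v => D f v.1 v.2.1 v.2.2) hDc _ _ _ hc2
          ((continuous_fst.mul hc2).add continuous_const)
          ((continuous_const.mul hc2).add continuous_const)).mul hc2)
    · intro p' θ
      have h0 := hasDerivAt_P_b f hf (circleMap 0 1 θ) (r * circleMap 0 1 θ + s)
        (p' * circleMap 0 1 θ + q)
      have h1 : HasDerivAt (fun p'' : ℂ => p'' * circleMap 0 1 θ + q) (circleMap 0 1 θ) p' :=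
        (hasDerivAt_mul_const _).add_const q
      simpa using (h0.comp p' h1).const_mul (circleMap 0 1 θ * I)
  -- RHS inner derivative
  have R1 : ∀ q', HasDerivAt (fun r' => F p q' r' s)
      (∫ θ in (0:ℝ)..(2*π), circleMap 0 1 θ * I *
        (P f (circleMap 0 1 θ) (p * circleMap 0 1 θ + q') (r * circleMap 0 1 θ + s)
          * circleMap 0 1 θ)) r := by
    intro q'
    have e1 : (fun r' => F p q' r' s) = fun r' => ∫ θ in (0:ℝ)..(2*π),
        circleMap 0 1 θ * I *
        f (circleMap 0 1 θ, p * circleMap 0 1 θ + q', r' * circleMap 0 1 θ + s) :=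
      funext fun r' => hF' p q' r' s
    rw [e1]
    refine hasDerivAt_param_integral
      (fun r' θ => circleMap 0 1 θ * I *
        f (circleMap 0 1 θ, p * circleMap 0 1 θ + q', r' * circleMap 0 1 θ + s))
      (fun r' θ => circleMap 0 1 θ * I *
        (P f (circleMap 0 1 θ) (p * circleMap 0 1 θ + q') (r' * circleMap 0 1 θ + s)
          * circleMap 0 1 θ))
      ?_ ?_ ?_ r 0 (2*π)
    · exact (hc2.mul continuous_const).mul (K f hf.continuous _ _ _ hc2
        ((continuous_const.mul hc2).add continuous_const)
        ((continuous_fst.mul hc2).add continuous_const))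
    · exact (hc2.mul continuous_const).mul
        ((K (fun v => P f v.1 v.2.1 v.2.2) hPc _ _ _ hc2
          ((continuous_const.mul hc2).add continuous_const)
          ((continuous_fst.mul hc2).add continuous_const)).mul hc2)
    · intro r' θ
      have h0 : HasDerivAt (fun c' => f (circleMap 0 1 θ, p * circleMap 0 1 θ + q', c'))
          (P f (circleMap 0 1 θ) (p * circleMap 0 1 θ + q') (r' * circleMap 0 1 θ + s))
          (r' * circleMap 0 1 θ + s) :=
        ((diff3 f hf _ _) _).hasDerivAt
      have h1 : HasDerivAt (fun r'' : ℂ => r'' * circleMap 0 1 θ + s) (circleMap 0 1 θ) r' :=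
        (hasDerivAt_mul_const _).add_const s
      simpa using (h0.comp r' h1).const_mul (circleMap 0 1 θ * I)
  -- RHS outer derivative
  have R2 : HasDerivAt (fun q' => ∫ θ in (0:ℝ)..(2*π), circleMap 0 1 θ * I *
        (P f (circleMap 0 1 θ) (p * circleMap 0 1 θ + q') (r * circleMap 0 1 θ + s)
          * circleMap 0 1 θ))
      (∫ θ in (0:ℝ)..(2*π), circleMap 0 1 θ * I *
        (D f (circleMap 0 1 θ) (p * circleMap 0 1 θ + q) (r * circleMap 0 1 θ + s)
          * circleMap 0 1 θ)) q := by
    refine hasDerivAt_param_integral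
      (fun q' θ => circleMap 0 1 θ * I *
        (P f (circleMap 0 1 θ) (p * circleMap 0 1 θ + q') (r * circleMap 0 1 θ + s)
          * circleMap 0 1 θ))
      (fun q' θ => circleMap 0 1 θ * I *
        (D f (circleMap 0 1 θ) (p * circleMap 0 1 θ + q') (r * circleMap 0 1 θ + s)
          * circleMap 0 1 θ))
      ?_ ?_ ?_ q 0 (2*π)
    · exact (hc2.mul continuous_const).mul
        ((K (fun v => P f v.1 v.2.1 v.2.2) hPc _ _ _ hc2
          ((continuous_const.mul hc2).add continuous_fst)
          ((continuous_const.mul hc2).add continuous_const)).mul hc2)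
    · exact (hc2.mul continuous_const).mul
        ((K (fun v => D f v.1 v.2.1 v.2.2) hDc _ _ _ hc2
          ((continuous_const.mul hc2).add continuous_fst)
          ((continuous_const.mul hc2).add continuous_const)).mul hc2)
    · intro q' θ
      have h0 := hasDerivAt_P_b f hf (circleMap 0 1 θ) (r * circleMap 0 1 θ + s)
        (p * circleMap 0 1 θ + q')
      have h1 : HasDerivAt (fun q'' : ℂ => p * circleMap 0 1 θ + q'') 1 q' :=
        (hasDerivAt_id q').const_add _
      simpa using ((h0.comp q' h1).mul_const (circleMap 0 1 θ)).const_mul (circleMap 0 1 θ * I)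
  have eL : (fun p' => deriv (fun s' => F p' q r s') s) = fun p' =>
      ∫ θ in (0:ℝ)..(2*π), circleMap 0 1 θ * I *
        P f (circleMap 0 1 θ) (p' * circleMap 0 1 θ + q) (r * circleMap 0 1 θ + s) :=
    funext fun p' => (L1 p').deriv
  have eR : (fun q' => deriv (fun r' => F p q' r' s) r) = fun q' =>
      ∫ θ in (0:ℝ)..(2*π), circleMap 0 1 θ * I *
        (P f (circleMap 0 1 θ) (p * circleMap 0 1 θ + q') (r * circleMap 0 1 θ + s)
          * circleMap 0 1 θ) :=
    funext fun q' => (R1 q').deriv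
  rw [eL, eR, L2.deriv, R2.deriv]
end
end

section
/- Let f : ℂ × ℂ × ℂ → ℂ be an entire function (complex differentiable at every point of ℂ³). Define u : ℝ⁴ → ℂ by u(x₁, x₂, x₃, x₄) = ∮_{|z|=1} f(z, (x₁ + i x₂)·z + (x₃ + i x₄), (−x₃ + i x₄)·z + (x₁ − i x₂)) dz, the contour integral over the unit circle centered at 0. Then u is harmonic on ℝ⁴: for every point of ℝ⁴, the sum over j = 1,…,4 of the second partial derivatives ∂²u/∂x_j² vanishes. -/
open Complex MeasureTheory Metric intervalIntegral Set Real

noncomputable section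

namespace Bateman





lemma rep_fderiv (Φ : ℂ × ℂ × ℂ → ℂ) (hΦ : Differentiable ℂ Φ) (x v : ℂ × ℂ × ℂ) :
    fderiv ℂ Φ x v = (2 * (Real.pi : ℂ))⁻¹ *
      ∫ θ in (0:ℝ)..(2*Real.pi), (circleMap 0 1 θ)⁻¹ * Φ (x + circleMap 0 1 θ • v) := by
  have haff : Differentiable ℂ (fun τ : ℂ => x + τ • v) :=
    (differentiable_const x).add (differentiable_id.smul_const v)
  have hg : Differentiable ℂ (fun τ : ℂ => Φ (x + τ • v)) := hΦ.comp haff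
  have h1 : HasDerivAt (fun τ : ℂ => Φ (x + τ • v)) (fderiv ℂ Φ x v) 0 := by
    have h2 : HasDerivAt (fun τ : ℂ => x + τ • v) ((1:ℂ) • v) 0 :=
      ((hasDerivAt_id (0:ℂ)).smul_const v).const_add x
    rw [one_smul] at h2
    have h3 := (hΦ.differentiableAt (x := x + (0:ℂ) • v)).hasFDerivAt
    have h4 := h3.comp_hasDerivAt (0:ℂ) h2
    rw [zero_smul, add_zero] at h4
    exact h4
  have hps := (hg.hasFPowerSeriesOnBall 0 one_pos).hasFPowerSeriesAt
  have hd : fderiv ℂ Φ x v = deriv (fun τ : ℂ => Φ (x + τ • v)) 0 := h1.deriv.symm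
  have hco : ((cauchyPowerSeries (fun τ : ℂ => Φ (x + τ • v)) 0 (1:ℝ) 1) fun _ => 1) =
      (2 * (Real.pi:ℂ) * I)⁻¹ • ∮ z in C(0, 1),
        (1 / (z - 0)) ^ 1 • (z - 0)⁻¹ • Φ (x + z • v) :=
    cauchyPowerSeries_apply (fun τ : ℂ => Φ (x + τ • v)) 0 1 1 1
  rw [hd, hps.deriv]
  push_cast at hco ⊢
  rw [hco, circleIntegral]
  simp only [deriv_circleMap, sub_zero, smul_eq_mul]
  have hne : ∀ θ : ℝ, circleMap 0 1 θ ≠ 0 := fun θ => circleMap_ne_center one_ne_zero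
  have hθ : ∀ θ : ℝ, circleMap 0 1 θ * I * ((1 / circleMap 0 1 θ) ^ 1 *
      ((circleMap 0 1 θ)⁻¹ * Φ (x + circleMap 0 1 θ • v)))
      = (2 * (Real.pi:ℂ))⁻¹ * (2 * Real.pi * I) *
        ((circleMap 0 1 θ)⁻¹ * Φ (x + circleMap 0 1 θ • v)) := by
    intro θ
    have h := hne θ
    have hπ : (Real.pi : ℂ) ≠ 0 := by exact_mod_cast Real.pi_ne_zero
    field_simp
  rw [intervalIntegral.integral_congr (g := fun θ : ℝ => (2 * (Real.pi:ℂ))⁻¹ * (2 * Real.pi * I) *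
        ((circleMap 0 1 θ)⁻¹ * Φ (x + circleMap 0 1 θ • v))) (fun θ _ => hθ θ)]
  rw [intervalIntegral.integral_const_mul]
  have hπ : (Real.pi : ℂ) ≠ 0 := by exact_mod_cast Real.pi_ne_zero
  have hI := Complex.I_ne_zero
  field_simp


lemma cont_circleMap_inv : Continuous fun θ : ℝ => (circleMap 0 1 θ)⁻¹ :=
  (continuous_circleMap 0 1).inv₀ (fun _ => circleMap_ne_center one_ne_zero)

lemma cont_fderiv_apply (Φ : ℂ × ℂ × ℂ → ℂ) (hΦ : Differentiable ℂ Φ) :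
    Continuous fun p : (ℂ × ℂ × ℂ) × (ℂ × ℂ × ℂ) => fderiv ℂ Φ p.1 p.2 := by
  have : (fun p : (ℂ × ℂ × ℂ) × (ℂ × ℂ × ℂ) => fderiv ℂ Φ p.1 p.2)
      = fun p : (ℂ × ℂ × ℂ) × (ℂ × ℂ × ℂ) => (2 * (Real.pi : ℂ))⁻¹ *
        ∫ θ in (0:ℝ)..(2*Real.pi), (circleMap 0 1 θ)⁻¹ * Φ (p.1 + circleMap 0 1 θ • p.2) := by
    funext p; exact rep_fderiv Φ hΦ p.1 p.2
  rw [this]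
  apply Continuous.mul continuous_const
  apply intervalIntegral.continuous_parametric_intervalIntegral_of_continuous'
  exact (cont_circleMap_inv.comp continuous_snd).mul
    (hΦ.continuous.comp ((continuous_fst.comp continuous_fst).add
      (((continuous_circleMap 0 1).comp continuous_snd).smul
        (continuous_snd.comp continuous_fst))))

def P1 : (ℂ × ℂ × ℂ) →L[ℂ] ℂ := ContinuousLinearMap.fst ℂ ℂ (ℂ × ℂ)
def P2 : (ℂ × ℂ × ℂ) →L[ℂ] ℂ :=
  (ContinuousLinearMap.fst ℂ ℂ ℂ).comp (ContinuousLinearMap.snd ℂ ℂ (ℂ × ℂ))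
def P3 : (ℂ × ℂ × ℂ) →L[ℂ] ℂ :=
  (ContinuousLinearMap.snd ℂ ℂ ℂ).comp (ContinuousLinearMap.snd ℂ ℂ (ℂ × ℂ))

lemma clm_decomp (T : (ℂ × ℂ × ℂ) →L[ℂ] ℂ) :
    T = P1.smulRight (T (1,0,0)) + P2.smulRight (T (0,1,0)) + P3.smulRight (T (0,0,1)) := by
  apply ContinuousLinearMap.ext
  intro v
  have hv : v = v.1 • ((1:ℂ),(0:ℂ),(0:ℂ)) + v.2.1 • ((0:ℂ),(1:ℂ),(0:ℂ))
      + v.2.2 • ((0:ℂ),(0:ℂ),(1:ℂ)) := by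
    simp [Prod.ext_iff]
  conv_lhs => rw [hv]
  simp only [map_add, _root_.map_smul, ContinuousLinearMap.add_apply,
    ContinuousLinearMap.smulRight_apply, smul_eq_mul, P1, P2, P3,
    ContinuousLinearMap.coe_comp', Function.comp_apply, ContinuousLinearMap.coe_fst',
    ContinuousLinearMap.coe_snd']

lemma cont_fderiv_op (Φ : ℂ × ℂ × ℂ → ℂ) (hΦ : Differentiable ℂ Φ) :
    Continuous fun x : ℂ × ℂ × ℂ => fderiv ℂ Φ x := by
  have h : ∀ v : ℂ × ℂ × ℂ, Continuous fun x => fderiv ℂ Φ x v := fun v =>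
    (cont_fderiv_apply Φ hΦ).comp (continuous_id.prodMk continuous_const)
  have : (fun x : ℂ × ℂ × ℂ => fderiv ℂ Φ x) = fun x =>
      P1.smulRight (fderiv ℂ Φ x (1,0,0)) + P2.smulRight (fderiv ℂ Φ x (0,1,0))
        + P3.smulRight (fderiv ℂ Φ x (0,0,1)) := by
    funext x; exact clm_decomp _
  rw [this]
  exact (((ContinuousLinearMap.smulRightL ℂ (ℂ × ℂ × ℂ) ℂ P1).continuous.comp (h _)).add
    ((ContinuousLinearMap.smulRightL ℂ (ℂ × ℂ × ℂ) ℂ P2).continuous.comp (h _))).add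
    ((ContinuousLinearMap.smulRightL ℂ (ℂ × ℂ × ℂ) ℂ P3).continuous.comp (h _))



lemma norm_circleMap (θ : ℝ) : ‖circleMap 0 1 θ‖ = 1 := by
  rw [norm_circleMap_zero]; norm_num

lemma diff_pd (Φ : ℂ × ℂ × ℂ → ℂ) (hΦ : Differentiable ℂ Φ) (v : ℂ × ℂ × ℂ) :
    Differentiable ℂ fun x => fderiv ℂ Φ x v := by
  intro x₀
  have hrep : (fun x => fderiv ℂ Φ x v) = fun x => (2 * (Real.pi : ℂ))⁻¹ *
      ∫ θ in (0:ℝ)..(2*Real.pi), (circleMap 0 1 θ)⁻¹ * Φ (x + circleMap 0 1 θ • v) := by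
    funext x; exact rep_fderiv Φ hΦ x v
  rw [hrep]
  set F : (ℂ × ℂ × ℂ) → ℝ → ℂ :=
    fun x θ => (circleMap 0 1 θ)⁻¹ * Φ (x + circleMap 0 1 θ • v) with hF
  set F' : (ℂ × ℂ × ℂ) → ℝ → (ℂ × ℂ × ℂ) →L[ℂ] ℂ :=
    fun x θ => (circleMap 0 1 θ)⁻¹ • fderiv ℂ Φ (x + circleMap 0 1 θ • v) with hF'
  obtain ⟨M, hM⟩ := (isCompact_closedBall x₀ (1 + ‖v‖)).exists_bound_of_continuousOn
    ((cont_fderiv_op Φ hΦ).continuousOn)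
  have hmem : ∀ x ∈ ball x₀ 1, ∀ θ : ℝ,
      x + circleMap 0 1 θ • v ∈ closedBall x₀ (1 + ‖v‖) := by
    intro x hx θ
    rw [mem_closedBall]
    calc dist (x + circleMap 0 1 θ • v) x₀ ≤ dist x x₀ + ‖circleMap 0 1 θ • v‖ := by
          rw [dist_eq_norm, dist_eq_norm]
          simpa [add_sub_right_comm] using norm_add_le (x - x₀) (circleMap 0 1 θ • v)
      _ ≤ 1 + ‖v‖ := by
          have : ‖circleMap 0 1 θ • v‖ = ‖v‖ := by
            rw [norm_smul, norm_circleMap, one_mul]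
          rw [this]
          exact add_le_add (le_of_lt (mem_ball.mp hx)) le_rfl
  have hFcont : ∀ x, Continuous fun θ => F x θ := by
    intro x
    exact (cont_circleMap_inv.mul (hΦ.continuous.comp
      (continuous_const.add ((continuous_circleMap 0 1).smul continuous_const))))
  have key := intervalIntegral.hasFDerivAt_integral_of_dominated_of_fderiv_le
    (F := F) (F' := F') (x₀ := x₀) (a := 0) (b := 2*Real.pi) (μ := volume)
    (bound := fun _ => M) (ball_mem_nhds x₀ one_pos)
    (Filter.Eventually.of_forall fun x => (hFcont x).aestronglyMeasurable)
    ((hFcont x₀).intervalIntegrable 0 (2*Real.pi))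
    (by
      apply Continuous.aestronglyMeasurable
      exact cont_circleMap_inv.smul ((cont_fderiv_op Φ hΦ).comp
        (continuous_const.add ((continuous_circleMap 0 1).smul continuous_const))))
    (Filter.Eventually.of_forall (by
      intro θ _ x hx
      have : ‖F' x θ‖ = ‖fderiv ℂ Φ (x + circleMap 0 1 θ • v)‖ := by
        show ‖(circleMap 0 1 θ)⁻¹ • fderiv ℂ Φ (x + circleMap 0 1 θ • v)‖ = _
        rw [norm_smul, norm_inv, norm_circleMap]
        norm_num
      rw [this]
      exact hM _ (hmem x hx θ)))
    (intervalIntegrable_const)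
    (Filter.Eventually.of_forall (by
      intro θ _ x _
      have h1 : HasFDerivAt (fun y : ℂ × ℂ × ℂ => y + circleMap 0 1 θ • v)
          (ContinuousLinearMap.id ℂ (ℂ × ℂ × ℂ)) x :=
        (hasFDerivAt_id x).add_const _
      have h2 := ((hΦ (x + circleMap 0 1 θ • v)).hasFDerivAt).comp x h1
      have h3 := h2.const_mul ((circleMap 0 1 θ)⁻¹)
      simpa [hF, hF', ContinuousLinearMap.comp_id] using h3))
  exact (key.const_mul _).differentiableAt

/-- Differentiation under the integral sign for affine families. -/
lemma key_deriv (Φ : ℂ × ℂ × ℂ → ℂ) (hΦ : Differentiable ℂ Φ)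
    (c : ℝ → ℂ) (hc : Continuous c) (base dir : ℝ → ℂ × ℂ × ℂ)
    (hbase : Continuous base) (hdir : Continuous dir) (t₀ : ℝ) :
    HasDerivAt (fun t : ℝ => ∫ θ in (0:ℝ)..(2*Real.pi), c θ * Φ (base θ + t • dir θ))
      (∫ θ in (0:ℝ)..(2*Real.pi), c θ * fderiv ℂ Φ (base θ + t₀ • dir θ) (dir θ)) t₀ := by
  obtain ⟨Mc, hMc⟩ := (isCompact_uIcc (a := (0:ℝ)) (b := 2*Real.pi)).exists_bound_of_continuousOn
    hc.continuousOn
  obtain ⟨Mb, hMb⟩ := (isCompact_uIcc (a := (0:ℝ)) (b := 2*Real.pi)).exists_bound_of_continuousOn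
    hbase.continuousOn
  obtain ⟨Md, hMd⟩ := (isCompact_uIcc (a := (0:ℝ)) (b := 2*Real.pi)).exists_bound_of_continuousOn
    hdir.continuousOn
  obtain ⟨Mf, hMf⟩ := (isCompact_closedBall (0 : ℂ × ℂ × ℂ)
    (Mb + (|t₀| + 1) * Md)).exists_bound_of_continuousOn ((cont_fderiv_op Φ hΦ).continuousOn)
  have hMd0 : 0 ≤ Md := le_trans (norm_nonneg _) (hMd 0 (by simp [Set.uIcc_of_le Real.two_pi_pos.le, Real.two_pi_pos.le]))
  have hmem : ∀ t ∈ ball t₀ 1, ∀ θ ∈ Set.uIcc (0:ℝ) (2*Real.pi),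
      base θ + t • dir θ ∈ closedBall (0 : ℂ × ℂ × ℂ) (Mb + (|t₀| + 1) * Md) := by
    intro t ht θ hθ
    rw [mem_closedBall, dist_zero_right]
    calc ‖base θ + t • dir θ‖ ≤ ‖base θ‖ + ‖t • dir θ‖ := norm_add_le _ _
      _ ≤ Mb + (|t₀| + 1) * Md := by
          apply add_le_add (hMb θ hθ)
          rw [norm_smul, Real.norm_eq_abs]
          have h1 : |t| ≤ |t₀| + 1 := by
            have := mem_ball.mp ht
            rw [Real.dist_eq] at this
            calc |t| = |t₀ + (t - t₀)| := by ring_nf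
              _ ≤ |t₀| + |t - t₀| := abs_add_le _ _
              _ ≤ |t₀| + 1 := by linarith
          exact mul_le_mul h1 (hMd θ hθ) (norm_nonneg _) (by positivity)
  have hcontin : ∀ t : ℝ, Continuous fun θ => c θ * Φ (base θ + t • dir θ) := fun t =>
    hc.mul (hΦ.continuous.comp (hbase.add (hdir.const_smul t)))
  have hderiv : ∀ θ : ℝ, ∀ t : ℝ, HasDerivAt (fun s : ℝ => c θ * Φ (base θ + s • dir θ))
      (c θ * fderiv ℂ Φ (base θ + t • dir θ) (dir θ)) t := by
    intro θ t
    have h2 : HasDerivAt (fun s : ℝ => base θ + s • dir θ) ((1:ℝ) • dir θ) t :=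
      ((hasDerivAt_id t).smul_const (dir θ)).const_add (base θ)
    rw [one_smul] at h2
    have h3 := ((hΦ (base θ + t • dir θ)).hasFDerivAt.restrictScalars ℝ).comp_hasDerivAt t h2
    simpa using h3.const_mul (c θ)
  have key := intervalIntegral.hasDerivAt_integral_of_dominated_loc_of_deriv_le
    (F := fun t θ => c θ * Φ (base θ + t • dir θ))
    (F' := fun t θ => c θ * fderiv ℂ Φ (base θ + t • dir θ) (dir θ))
    (x₀ := t₀) (a := 0) (b := 2*Real.pi) (μ := volume)
    (bound := fun _ => Mc * (Mf * Md)) (ball_mem_nhds t₀ one_pos)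
    (Filter.Eventually.of_forall fun t => (hcontin t).aestronglyMeasurable)
    ((hcontin t₀).intervalIntegrable 0 (2*Real.pi))
    (by
      apply Continuous.aestronglyMeasurable
      exact hc.mul ((cont_fderiv_apply Φ hΦ).comp
        ((hbase.add (hdir.const_smul t₀)).prodMk hdir)))
    (Filter.Eventually.of_forall (by
      intro θ hθ t ht
      have hθ' : θ ∈ Set.uIcc (0:ℝ) (2*Real.pi) := Set.uIoc_subset_uIcc hθ
      rw [norm_mul]
      have h1 : ‖fderiv ℂ Φ (base θ + t • dir θ) (dir θ)‖ ≤ Mf * Md := by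
        calc ‖fderiv ℂ Φ (base θ + t • dir θ) (dir θ)‖
            ≤ ‖fderiv ℂ Φ (base θ + t • dir θ)‖ * ‖dir θ‖ :=
              ContinuousLinearMap.le_opNorm _ _
          _ ≤ Mf * Md := mul_le_mul (hMf _ (hmem t ht θ hθ')) (hMd θ hθ')
              (norm_nonneg _) (le_trans (norm_nonneg _) (hMf _ (hmem t ht θ hθ')))
      exact mul_le_mul (hMc θ hθ') h1 (norm_nonneg _)
        (le_trans (norm_nonneg _) (hMc θ hθ'))))
    (intervalIntegrable_const)
    (Filter.Eventually.of_forall (fun θ _ t _ => hderiv θ t))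
  exact key.2



/-- Second derivative of the parametrized contour integral along an affine family. -/
lemma dd (f : ℂ × ℂ × ℂ → ℂ) (hf : Differentiable ℂ f)
    (base dir : ℝ → ℂ × ℂ × ℂ) (hbase : Continuous base) (hdir : Continuous dir)
    (α β : ℝ → ℂ) (hα : Continuous α) (hβ : Continuous β)
    (hexp : ∀ θ, dir θ = α θ • ((0:ℂ),(1:ℂ),(0:ℂ)) + β θ • ((0:ℂ),(0:ℂ),(1:ℂ)))
    (t₀ : ℝ) :
    deriv (fun t => deriv
        (fun s : ℝ => ∫ θ in (0:ℝ)..(2*Real.pi), (circleMap 0 1 θ * I) * f (base θ + s • dir θ)) t)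
        t₀
      = ∫ θ in (0:ℝ)..(2*Real.pi), (circleMap 0 1 θ * I) *
          (α θ * (α θ * fderiv ℂ (fun x => fderiv ℂ f x ((0:ℂ),(1:ℂ),(0:ℂ))) (base θ + t₀ • dir θ) ((0:ℂ),(1:ℂ),(0:ℂ))
                + β θ * fderiv ℂ (fun x => fderiv ℂ f x ((0:ℂ),(1:ℂ),(0:ℂ))) (base θ + t₀ • dir θ) ((0:ℂ),(0:ℂ),(1:ℂ)))
         + β θ * (α θ * fderiv ℂ (fun x => fderiv ℂ f x ((0:ℂ),(0:ℂ),(1:ℂ))) (base θ + t₀ • dir θ) ((0:ℂ),(1:ℂ),(0:ℂ))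
                + β θ * fderiv ℂ (fun x => fderiv ℂ f x ((0:ℂ),(0:ℂ),(1:ℂ))) (base θ + t₀ • dir θ) ((0:ℂ),(0:ℂ),(1:ℂ)))) := by
  set e₂ : ℂ × ℂ × ℂ := ((0:ℂ),(1:ℂ),(0:ℂ))
  set e₃ : ℂ × ℂ × ℂ := ((0:ℂ),(0:ℂ),(1:ℂ))
  set f₂ : ℂ × ℂ × ℂ → ℂ := fun x => fderiv ℂ f x e₂ with hf₂def
  set f₃ : ℂ × ℂ × ℂ → ℂ := fun x => fderiv ℂ f x e₃ with hf₃def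
  have hf₂ : Differentiable ℂ f₂ := diff_pd f hf e₂
  have hf₃ : Differentiable ℂ f₃ := diff_pd f hf e₃
  have hc : Continuous fun θ : ℝ => circleMap 0 1 θ * I :=
    (continuous_circleMap 0 1).mul continuous_const
  -- expansion of directional derivative of any entire Φ along dir
  have hexpand : ∀ (Φ : ℂ × ℂ × ℂ → ℂ), ∀ x : ℂ × ℂ × ℂ, ∀ θ : ℝ,
      fderiv ℂ Φ x (dir θ) = α θ * fderiv ℂ Φ x e₂ + β θ * fderiv ℂ Φ x e₃ := by
    intro Φ x θ
    rw [hexp θ, map_add, _root_.map_smul, _root_.map_smul, smul_eq_mul, smul_eq_mul]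
  -- Step 1: the inner derivative
  have h1 : ∀ t : ℝ, deriv
      (fun s : ℝ => ∫ θ in (0:ℝ)..(2*Real.pi), (circleMap 0 1 θ * I) * f (base θ + s • dir θ)) t
      = ∫ θ in (0:ℝ)..(2*Real.pi),
          ((circleMap 0 1 θ * I) * α θ * f₂ (base θ + t • dir θ)
           + (circleMap 0 1 θ * I) * β θ * f₃ (base θ + t • dir θ)) := by
    intro t
    rw [(key_deriv f hf _ hc base dir hbase hdir t).deriv]
    apply intervalIntegral.integral_congr
    intro θ _
    beta_reduce
    rw [hexpand f _ θ]
    ring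
  -- continuity of the two pieces
  have hcont2 : ∀ t : ℝ, Continuous fun θ =>
      (circleMap 0 1 θ * I) * α θ * f₂ (base θ + t • dir θ) := by
    intro t
    exact (hc.mul hα).mul (hf₂.continuous.comp (hbase.add (hdir.const_smul t)))
  have hcont3 : ∀ t : ℝ, Continuous fun θ =>
      (circleMap 0 1 θ * I) * β θ * f₃ (base θ + t • dir θ) := by
    intro t
    exact (hc.mul hβ).mul (hf₃.continuous.comp (hbase.add (hdir.const_smul t)))
  -- Step 2: derivative of each piece at t₀
  have h2 := key_deriv f₂ hf₂ _ (hc.mul hα) base dir hbase hdir t₀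
  have h3 := key_deriv f₃ hf₃ _ (hc.mul hβ) base dir hbase hdir t₀
  have h4 := h2.add h3
  have h5 : (fun t : ℝ =>
      (∫ θ in (0:ℝ)..(2*Real.pi), (circleMap 0 1 θ * I) * α θ * f₂ (base θ + t • dir θ))
      + (∫ θ in (0:ℝ)..(2*Real.pi), (circleMap 0 1 θ * I) * β θ * f₃ (base θ + t • dir θ)))
      = fun t : ℝ => deriv
      (fun s : ℝ => ∫ θ in (0:ℝ)..(2*Real.pi), (circleMap 0 1 θ * I) * f (base θ + s • dir θ)) t := by
    funext t
    rw [h1 t, intervalIntegral.integral_add ((hcont2 t).intervalIntegrable _ _)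
      ((hcont3 t).intervalIntegrable _ _)]
  rw [← h5] at *
  have h6 : HasDerivAt (fun t : ℝ =>
      (∫ θ in (0:ℝ)..(2*Real.pi), (circleMap 0 1 θ * I) * α θ * f₂ (base θ + t • dir θ))
      + (∫ θ in (0:ℝ)..(2*Real.pi), (circleMap 0 1 θ * I) * β θ * f₃ (base θ + t • dir θ)))
      ((∫ θ in (0:ℝ)..(2*Real.pi), (circleMap 0 1 θ * I) * α θ * fderiv ℂ f₂ (base θ + t₀ • dir θ) (dir θ))
       + (∫ θ in (0:ℝ)..(2*Real.pi), (circleMap 0 1 θ * I) * β θ * fderiv ℂ f₃ (base θ + t₀ • dir θ) (dir θ))) t₀ := by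
    convert h4 using 2 <;> rfl
  rw [h6.deriv]
  have hA : Continuous fun θ : ℝ => fderiv ℂ f₂ (base θ + t₀ • dir θ) (dir θ) :=
    (cont_fderiv_apply f₂ hf₂).comp ((hbase.add (hdir.const_smul t₀)).prodMk hdir)
  have hB : Continuous fun θ : ℝ => fderiv ℂ f₃ (base θ + t₀ • dir θ) (dir θ) :=
    (cont_fderiv_apply f₃ hf₃).comp ((hbase.add (hdir.const_smul t₀)).prodMk hdir)
  rw [← intervalIntegral.integral_add
    ((show Continuous fun θ => (circleMap 0 1 θ * I) * α θ * fderiv ℂ f₂ (base θ + t₀ • dir θ) (dir θ) from (hc.mul hα).mul hA).intervalIntegrable _ _)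
    ((show Continuous fun θ => (circleMap 0 1 θ * I) * β θ * fderiv ℂ f₃ (base θ + t₀ • dir θ) (dir θ) from (hc.mul hβ).mul hB).intervalIntegrable _ _)]
  apply intervalIntegral.integral_congr
  intro θ _
  beta_reduce
  rw [hexpand f₂ _ θ, hexpand f₃ _ θ]
  ring


def aff (A B C D : ℂ) : ℝ → ℂ × ℂ × ℂ :=
  fun θ => (circleMap 0 1 θ, A * circleMap 0 1 θ + B, C * circleMap 0 1 θ + D)

def dira (a b c d : ℂ) : ℝ → ℂ × ℂ × ℂ :=
  fun θ => ((0:ℂ), a * circleMap 0 1 θ + b, c * circleMap 0 1 θ + d)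

lemma cont_aff (A B C D : ℂ) : Continuous (aff A B C D) :=
  (continuous_circleMap 0 1).prodMk
    ((((continuous_const.mul (continuous_circleMap 0 1)).add continuous_const)).prodMk
      (((continuous_const.mul (continuous_circleMap 0 1)).add continuous_const)))

lemma cont_dira (a b c d : ℂ) : Continuous (dira a b c d) :=
  continuous_const.prodMk
    ((((continuous_const.mul (continuous_circleMap 0 1)).add continuous_const)).prodMk
      (((continuous_const.mul (continuous_circleMap 0 1)).add continuous_const)))

lemma dira_exp (a b c d : ℂ) (θ : ℝ) :
    dira a b c d θ = (a * circleMap 0 1 θ + b) • ((0:ℂ),(1:ℂ),(0:ℂ))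
      + (c * circleMap 0 1 θ + d) • ((0:ℂ),(0:ℂ),(1:ℂ)) := by
  simp [dira, Prod.ext_iff]

lemma sum4 {g₁ g₂ g₃ g₄ : ℝ → ℂ} (h₁ : Continuous g₁) (h₂ : Continuous g₂)
    (h₃ : Continuous g₃) (h₄ : Continuous g₄)
    (hsum : ∀ θ, g₁ θ + g₂ θ + g₃ θ + g₄ θ = 0) :
    (∫ θ in (0:ℝ)..(2*Real.pi), g₁ θ) + (∫ θ in (0:ℝ)..(2*Real.pi), g₂ θ)
      + (∫ θ in (0:ℝ)..(2*Real.pi), g₃ θ) + (∫ θ in (0:ℝ)..(2*Real.pi), g₄ θ) = 0 := by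
  rw [← intervalIntegral.integral_add (h₁.intervalIntegrable _ _) (h₂.intervalIntegrable _ _),
      ← intervalIntegral.integral_add ((show Continuous fun x => g₁ x + g₂ x from h₁.add h₂).intervalIntegrable _ _)
        (h₃.intervalIntegrable _ _),
      ← intervalIntegral.integral_add ((show Continuous fun x => g₁ x + g₂ x + g₃ x from (h₁.add h₂).add h₃).intervalIntegrable _ _)
        (h₄.intervalIntegrable _ _)]
  rw [intervalIntegral.integral_congr (g := fun _ => (0:ℂ)) (fun θ _ => hsum θ)]
  simp


end Bateman

open Bateman in
/-- **Bateman's formula.** Let `f : ℂ × ℂ × ℂ → ℂ` be entire and define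
`u (x₁, x₂, x₃, x₄) = ∮_{|z|=1} f (z, (x₁+ix₂)z + (x₃+ix₄), (−x₃+ix₄)z + (x₁−ix₂)) dz`.
Then `u` is harmonic on `ℝ⁴`: the sum of its four second partial derivatives vanishes. -/
theorem stmt_8 (f : ℂ × ℂ × ℂ → ℂ) (hf : Differentiable ℂ f)
    (u : ℝ → ℝ → ℝ → ℝ → ℂ)
    (hu : ∀ x₁ x₂ x₃ x₄ : ℝ, u x₁ x₂ x₃ x₄ =
      ∮ z in C(0, 1), f (z, ((x₁ : ℂ) + Complex.I * (x₂ : ℂ)) * z + ((x₃ : ℂ) + Complex.I * (x₄ : ℂ)),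
        (-(x₃ : ℂ) + Complex.I * (x₄ : ℂ)) * z + ((x₁ : ℂ) - Complex.I * (x₂ : ℂ))))
    (x₁ x₂ x₃ x₄ : ℝ) :
    deriv (fun t => deriv (fun t' => u t' x₂ x₃ x₄) t) x₁ +
      deriv (fun t => deriv (fun t' => u x₁ t' x₃ x₄) t) x₂ +
      deriv (fun t => deriv (fun t' => u x₁ x₂ t' x₄) t) x₃ +
      deriv (fun t => deriv (fun t' => u x₁ x₂ x₃ t') t) x₄ = 0 := by
  have hz := continuous_circleMap 0 1
  -- the four function identities
  have hpt1 : ∀ (t θ : ℝ),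
      ((circleMap 0 1 θ : ℂ), ((t:ℂ) + I * (x₂:ℂ)) * circleMap 0 1 θ + ((x₃:ℂ) + I * (x₄:ℂ)),
        (-(x₃:ℂ) + I * (x₄:ℂ)) * circleMap 0 1 θ + ((t:ℂ) - I * (x₂:ℂ)))
      = aff (I*(x₂:ℂ)) ((x₃:ℂ) + I*(x₄:ℂ)) (-(x₃:ℂ) + I*(x₄:ℂ)) (-(I*(x₂:ℂ))) θ
        + t • dira 1 0 0 1 θ := by
    intro t θ
    simp only [aff, dira, Prod.smul_mk, Prod.mk_add_mk, Complex.real_smul, Prod.mk.injEq]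
    refine ⟨by ring, by ring, by ring⟩
  have hfun1 : (fun t' : ℝ => u t' x₂ x₃ x₄) = fun t' : ℝ =>
      ∫ θ in (0:ℝ)..(2*Real.pi), (circleMap 0 1 θ * I) *
        f (aff (I*(x₂:ℂ)) ((x₃:ℂ) + I*(x₄:ℂ)) (-(x₃:ℂ) + I*(x₄:ℂ)) (-(I*(x₂:ℂ))) θ
          + t' • dira 1 0 0 1 θ) := by
    funext t'
    rw [hu t' x₂ x₃ x₄]
    simp only [circleIntegral, deriv_circleMap, smul_eq_mul]
    refine intervalIntegral.integral_congr fun θ _ => ?_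
    rw [← hpt1 t' θ]
  have hpt2 : ∀ (t θ : ℝ),
      ((circleMap 0 1 θ : ℂ), ((x₁:ℂ) + I * (t:ℂ)) * circleMap 0 1 θ + ((x₃:ℂ) + I * (x₄:ℂ)),
        (-(x₃:ℂ) + I * (x₄:ℂ)) * circleMap 0 1 θ + ((x₁:ℂ) - I * (t:ℂ)))
      = aff ((x₁:ℂ)) ((x₃:ℂ) + I*(x₄:ℂ)) (-(x₃:ℂ) + I*(x₄:ℂ)) ((x₁:ℂ)) θ
        + t • dira I 0 0 (-I) θ := by
    intro t θ
    simp only [aff, dira, Prod.smul_mk, Prod.mk_add_mk, Complex.real_smul, Prod.mk.injEq]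
    refine ⟨by ring, by ring, by ring⟩
  have hfun2 : (fun t' : ℝ => u x₁ t' x₃ x₄) = fun t' : ℝ =>
      ∫ θ in (0:ℝ)..(2*Real.pi), (circleMap 0 1 θ * I) *
        f (aff ((x₁:ℂ)) ((x₃:ℂ) + I*(x₄:ℂ)) (-(x₃:ℂ) + I*(x₄:ℂ)) ((x₁:ℂ)) θ
          + t' • dira I 0 0 (-I) θ) := by
    funext t'
    rw [hu x₁ t' x₃ x₄]
    simp only [circleIntegral, deriv_circleMap, smul_eq_mul]
    refine intervalIntegral.integral_congr fun θ _ => ?_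
    rw [← hpt2 t' θ]
  have hpt3 : ∀ (t θ : ℝ),
      ((circleMap 0 1 θ : ℂ), ((x₁:ℂ) + I * (x₂:ℂ)) * circleMap 0 1 θ + ((t:ℂ) + I * (x₄:ℂ)),
        (-(t:ℂ) + I * (x₄:ℂ)) * circleMap 0 1 θ + ((x₁:ℂ) - I * (x₂:ℂ)))
      = aff ((x₁:ℂ) + I*(x₂:ℂ)) (I*(x₄:ℂ)) (I*(x₄:ℂ)) ((x₁:ℂ) - I*(x₂:ℂ)) θ
        + t • dira 0 1 (-1) 0 θ := by
    intro t θ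
    simp only [aff, dira, Prod.smul_mk, Prod.mk_add_mk, Complex.real_smul, Prod.mk.injEq]
    refine ⟨by ring, by ring, by ring⟩
  have hfun3 : (fun t' : ℝ => u x₁ x₂ t' x₄) = fun t' : ℝ =>
      ∫ θ in (0:ℝ)..(2*Real.pi), (circleMap 0 1 θ * I) *
        f (aff ((x₁:ℂ) + I*(x₂:ℂ)) (I*(x₄:ℂ)) (I*(x₄:ℂ)) ((x₁:ℂ) - I*(x₂:ℂ)) θ
          + t' • dira 0 1 (-1) 0 θ) := by
    funext t'
    rw [hu x₁ x₂ t' x₄]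
    simp only [circleIntegral, deriv_circleMap, smul_eq_mul]
    refine intervalIntegral.integral_congr fun θ _ => ?_
    rw [← hpt3 t' θ]
  have hpt4 : ∀ (t θ : ℝ),
      ((circleMap 0 1 θ : ℂ), ((x₁:ℂ) + I * (x₂:ℂ)) * circleMap 0 1 θ + ((x₃:ℂ) + I * (t:ℂ)),
        (-(x₃:ℂ) + I * (t:ℂ)) * circleMap 0 1 θ + ((x₁:ℂ) - I * (x₂:ℂ)))
      = aff ((x₁:ℂ) + I*(x₂:ℂ)) ((x₃:ℂ)) (-(x₃:ℂ)) ((x₁:ℂ) - I*(x₂:ℂ)) θ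
        + t • dira 0 I I 0 θ := by
    intro t θ
    simp only [aff, dira, Prod.smul_mk, Prod.mk_add_mk, Complex.real_smul, Prod.mk.injEq]
    refine ⟨by ring, by ring, by ring⟩
  have hfun4 : (fun t' : ℝ => u x₁ x₂ x₃ t') = fun t' : ℝ =>
      ∫ θ in (0:ℝ)..(2*Real.pi), (circleMap 0 1 θ * I) *
        f (aff ((x₁:ℂ) + I*(x₂:ℂ)) ((x₃:ℂ)) (-(x₃:ℂ)) ((x₁:ℂ) - I*(x₂:ℂ)) θ
          + t' • dira 0 I I 0 θ) := by
    funext t'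
    rw [hu x₁ x₂ x₃ t']
    simp only [circleIntegral, deriv_circleMap, smul_eq_mul]
    refine intervalIntegral.integral_congr fun θ _ => ?_
    rw [← hpt4 t' θ]
  -- rewrite all four to the common point
  have hX1 : ∀ θ : ℝ, aff (I*(x₂:ℂ)) ((x₃:ℂ) + I*(x₄:ℂ)) (-(x₃:ℂ) + I*(x₄:ℂ)) (-(I*(x₂:ℂ))) θ
      + x₁ • dira 1 0 0 1 θ
      = aff ((x₁:ℂ) + I*(x₂:ℂ)) ((x₃:ℂ) + I*(x₄:ℂ)) (-(x₃:ℂ) + I*(x₄:ℂ)) ((x₁:ℂ) - I*(x₂:ℂ)) θ := by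
    intro θ
    rw [← hpt1 x₁ θ]
    simp only [aff]
  have hX2 : ∀ θ : ℝ, aff ((x₁:ℂ)) ((x₃:ℂ) + I*(x₄:ℂ)) (-(x₃:ℂ) + I*(x₄:ℂ)) ((x₁:ℂ)) θ
      + x₂ • dira I 0 0 (-I) θ
      = aff ((x₁:ℂ) + I*(x₂:ℂ)) ((x₃:ℂ) + I*(x₄:ℂ)) (-(x₃:ℂ) + I*(x₄:ℂ)) ((x₁:ℂ) - I*(x₂:ℂ)) θ := by
    intro θ
    rw [← hpt2 x₂ θ]
    simp only [aff]
  have hX3 : ∀ θ : ℝ, aff ((x₁:ℂ) + I*(x₂:ℂ)) (I*(x₄:ℂ)) (I*(x₄:ℂ)) ((x₁:ℂ) - I*(x₂:ℂ)) θ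
      + x₃ • dira 0 1 (-1) 0 θ
      = aff ((x₁:ℂ) + I*(x₂:ℂ)) ((x₃:ℂ) + I*(x₄:ℂ)) (-(x₃:ℂ) + I*(x₄:ℂ)) ((x₁:ℂ) - I*(x₂:ℂ)) θ := by
    intro θ
    rw [← hpt3 x₃ θ]
    simp only [aff]
  have hX4 : ∀ θ : ℝ, aff ((x₁:ℂ) + I*(x₂:ℂ)) ((x₃:ℂ)) (-(x₃:ℂ)) ((x₁:ℂ) - I*(x₂:ℂ)) θ
      + x₄ • dira 0 I I 0 θ
      = aff ((x₁:ℂ) + I*(x₂:ℂ)) ((x₃:ℂ) + I*(x₄:ℂ)) (-(x₃:ℂ) + I*(x₄:ℂ)) ((x₁:ℂ) - I*(x₂:ℂ)) θ := by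
    intro θ
    rw [← hpt4 x₄ θ]
    simp only [aff]
  have hcc : ∀ q r : ℂ, Continuous fun θ : ℝ => q * circleMap 0 1 θ + r := fun q r =>
    (continuous_const.mul hz).add continuous_const
  simp only [hfun1, hfun2, hfun3, hfun4]
  rw [dd f hf _ _ (cont_aff _ _ _ _) (cont_dira _ _ _ _)
      (fun θ => (1:ℂ) * circleMap 0 1 θ + 0) (fun θ => (0:ℂ) * circleMap 0 1 θ + 1)
      (hcc 1 0) (hcc 0 1) (dira_exp 1 0 0 1) x₁,
     dd f hf _ _ (cont_aff _ _ _ _) (cont_dira _ _ _ _)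
      (fun θ => I * circleMap 0 1 θ + 0) (fun θ => (0:ℂ) * circleMap 0 1 θ + (-I))
      (hcc I 0) (hcc 0 (-I)) (dira_exp I 0 0 (-I)) x₂,
     dd f hf _ _ (cont_aff _ _ _ _) (cont_dira _ _ _ _)
      (fun θ => (0:ℂ) * circleMap 0 1 θ + 1) (fun θ => (-1:ℂ) * circleMap 0 1 θ + 0)
      (hcc 0 1) (hcc (-1) 0) (dira_exp 0 1 (-1) 0) x₃,
     dd f hf _ _ (cont_aff _ _ _ _) (cont_dira _ _ _ _)
      (fun θ => (0:ℂ) * circleMap 0 1 θ + I) (fun θ => I * circleMap 0 1 θ + 0)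
      (hcc 0 I) (hcc I 0) (dira_exp 0 I I 0) x₄]
  simp only [hX1, hX2, hX3, hX4]
  have hA : Continuous fun θ : ℝ => fderiv ℂ (fun x => fderiv ℂ f x ((0:ℂ),(1:ℂ),(0:ℂ)))
      (aff ((x₁:ℂ) + I*(x₂:ℂ)) ((x₃:ℂ) + I*(x₄:ℂ)) (-(x₃:ℂ) + I*(x₄:ℂ)) ((x₁:ℂ) - I*(x₂:ℂ)) θ)
      ((0:ℂ),(1:ℂ),(0:ℂ)) :=
    (cont_fderiv_apply _ (diff_pd f hf _)).comp ((cont_aff _ _ _ _).prodMk continuous_const)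
  have hB : Continuous fun θ : ℝ => fderiv ℂ (fun x => fderiv ℂ f x ((0:ℂ),(1:ℂ),(0:ℂ)))
      (aff ((x₁:ℂ) + I*(x₂:ℂ)) ((x₃:ℂ) + I*(x₄:ℂ)) (-(x₃:ℂ) + I*(x₄:ℂ)) ((x₁:ℂ) - I*(x₂:ℂ)) θ)
      ((0:ℂ),(0:ℂ),(1:ℂ)) :=
    (cont_fderiv_apply _ (diff_pd f hf _)).comp ((cont_aff _ _ _ _).prodMk continuous_const)
  have hC : Continuous fun θ : ℝ => fderiv ℂ (fun x => fderiv ℂ f x ((0:ℂ),(0:ℂ),(1:ℂ)))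
      (aff ((x₁:ℂ) + I*(x₂:ℂ)) ((x₃:ℂ) + I*(x₄:ℂ)) (-(x₃:ℂ) + I*(x₄:ℂ)) ((x₁:ℂ) - I*(x₂:ℂ)) θ)
      ((0:ℂ),(1:ℂ),(0:ℂ)) :=
    (cont_fderiv_apply _ (diff_pd f hf _)).comp ((cont_aff _ _ _ _).prodMk continuous_const)
  have hD : Continuous fun θ : ℝ => fderiv ℂ (fun x => fderiv ℂ f x ((0:ℂ),(0:ℂ),(1:ℂ)))
      (aff ((x₁:ℂ) + I*(x₂:ℂ)) ((x₃:ℂ) + I*(x₄:ℂ)) (-(x₃:ℂ) + I*(x₄:ℂ)) ((x₁:ℂ) - I*(x₂:ℂ)) θ)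
      ((0:ℂ),(0:ℂ),(1:ℂ)) :=
    (cont_fderiv_apply _ (diff_pd f hf _)).comp ((cont_aff _ _ _ _).prodMk continuous_const)
  have hg : ∀ a b c d : ℂ, Continuous fun θ : ℝ => (circleMap 0 1 θ * I) *
      ((a * circleMap 0 1 θ + b) * ((a * circleMap 0 1 θ + b) *
          fderiv ℂ (fun x => fderiv ℂ f x ((0:ℂ),(1:ℂ),(0:ℂ)))
            (aff ((x₁:ℂ) + I*(x₂:ℂ)) ((x₃:ℂ) + I*(x₄:ℂ)) (-(x₃:ℂ) + I*(x₄:ℂ)) ((x₁:ℂ) - I*(x₂:ℂ)) θ)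
            ((0:ℂ),(1:ℂ),(0:ℂ))
        + (c * circleMap 0 1 θ + d) *
          fderiv ℂ (fun x => fderiv ℂ f x ((0:ℂ),(1:ℂ),(0:ℂ)))
            (aff ((x₁:ℂ) + I*(x₂:ℂ)) ((x₃:ℂ) + I*(x₄:ℂ)) (-(x₃:ℂ) + I*(x₄:ℂ)) ((x₁:ℂ) - I*(x₂:ℂ)) θ)
            ((0:ℂ),(0:ℂ),(1:ℂ)))
      + (c * circleMap 0 1 θ + d) * ((a * circleMap 0 1 θ + b) *
          fderiv ℂ (fun x => fderiv ℂ f x ((0:ℂ),(0:ℂ),(1:ℂ)))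
            (aff ((x₁:ℂ) + I*(x₂:ℂ)) ((x₃:ℂ) + I*(x₄:ℂ)) (-(x₃:ℂ) + I*(x₄:ℂ)) ((x₁:ℂ) - I*(x₂:ℂ)) θ)
            ((0:ℂ),(1:ℂ),(0:ℂ))
        + (c * circleMap 0 1 θ + d) *
          fderiv ℂ (fun x => fderiv ℂ f x ((0:ℂ),(0:ℂ),(1:ℂ)))
            (aff ((x₁:ℂ) + I*(x₂:ℂ)) ((x₃:ℂ) + I*(x₄:ℂ)) (-(x₃:ℂ) + I*(x₄:ℂ)) ((x₁:ℂ) - I*(x₂:ℂ)) θ)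
            ((0:ℂ),(0:ℂ),(1:ℂ)))) := by
    intro a b c d
    exact (hz.mul continuous_const).mul
      (((hcc a b).mul (((hcc a b).mul hA).add ((hcc c d).mul hB))).add
       ((hcc c d).mul (((hcc a b).mul hC).add ((hcc c d).mul hD))))
  refine sum4 (hg 1 0 0 1) (hg I 0 0 (-I)) (hg 0 1 (-1) 0) (hg 0 I I 0) ?_
  intro θ
  beta_reduce
  linear_combination (circleMap 0 1 θ * I * (1 + circleMap 0 1 θ^2) *
    (fderiv ℂ (fun x => fderiv ℂ f x ((0:ℂ),(1:ℂ),(0:ℂ)))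
        (aff ((x₁:ℂ) + I*(x₂:ℂ)) ((x₃:ℂ) + I*(x₄:ℂ)) (-(x₃:ℂ) + I*(x₄:ℂ)) ((x₁:ℂ) - I*(x₂:ℂ)) θ)
        ((0:ℂ),(1:ℂ),(0:ℂ))
     + fderiv ℂ (fun x => fderiv ℂ f x ((0:ℂ),(0:ℂ),(1:ℂ)))
        (aff ((x₁:ℂ) + I*(x₂:ℂ)) ((x₃:ℂ) + I*(x₄:ℂ)) (-(x₃:ℂ) + I*(x₄:ℂ)) ((x₁:ℂ) - I*(x₂:ℂ)) θ)
        ((0:ℂ),(0:ℂ),(1:ℂ)))) * Complex.I_sq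
end
end
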